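/- arXiv:2404.06872 — 10 statements merged into one kernel-verified Lean document; each statement's English description precedes it below -/
import Mathlib

section
/- If α is a well-founded linear order, then the order 2^α (whose elements are formal sums 2^{α(n-1)}+...+2^{α(0)} with α(0)<...<α(n-1) in α, i.e., finite strictly decreasing sequences in α compared lexicographically with the largest exponent taking precedence) is well-founded. -/
/-- `2^α`: finite strictly decreasing sequences in `α` (largest exponent first). -/
def DecList (α : Type*) [LinearOrder α] : Type _ := {l : List α // l.Chain' (· > ·)}

/-- The lexicographic order on `2^α`, with the largest exponent taking precedence. -/
def TwoLt {α : Type*} [LinearOrder α] (σ τ : DecList α) : Prop :=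
  List.Lex (· < ·) σ.1 τ.1

section Aux

variable {α : Type*} [LinearOrder α]

/-- Evaluate a list of exponents as an ordinal `2^e a₀ + ...`. -/
noncomputable def evalTwo (e : α → Ordinal) : List α → Ordinal
  | [] => 0
  | a :: l => 2 ^ e a + evalTwo e l

lemma evalTwo_bound (e : α → Ordinal) (he : StrictMono e) :
    ∀ l : List α, l.Chain' (· > ·) → ∀ a : α, (∀ b ∈ l, b < a) →
      evalTwo e l < 2 ^ e a := by
  intro l
  induction l with
  | nil =>
    intro _ a _
    exact Ordinal.opow_pos _ (by norm_num)
  | cons b m ih =>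
    intro hc a hlt
    have hcm : m.Chain' (· > ·) := hc.tail
    have hpw : List.Pairwise (· > ·) (b :: m) := List.isChain_iff_pairwise.mp hc
    have hmb : ∀ c ∈ m, c < b := fun c hcmem => (List.pairwise_cons.mp hpw).1 c hcmem
    have h1 : evalTwo e m < 2 ^ e b := ih hcm b hmb
    have hba : e b < e a := he (hlt b (List.mem_cons_self))
    calc evalTwo e (b :: m) = 2 ^ e b + evalTwo e m := rfl
      _ < 2 ^ e b + 2 ^ e b := by exact (add_lt_add_iff_left _).mpr h1
      _ = 2 ^ e b * 2 := by
          rw [(by norm_num : (2 : Ordinal) = 1 + 1), mul_add, mul_one]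
      _ = 2 ^ (e b + 1) := by
          rw [← Ordinal.opow_succ, Order.succ_eq_add_one]
      _ ≤ 2 ^ e a := by
          apply Ordinal.opow_le_opow_right (by norm_num)
          exact Order.add_one_le_iff.mpr hba

omit [LinearOrder α] in
lemma evalTwo_pos (e : α → Ordinal) (a : α) (l : List α) :
    0 < evalTwo e (a :: l) :=
  lt_of_lt_of_le (Ordinal.opow_pos (e a) (by norm_num)) (le_self_add)

lemma evalTwo_strictMono (e : α → Ordinal) (he : StrictMono e) :
    ∀ l m : List α, l.Chain' (· > ·) → m.Chain' (· > ·) →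
      List.Lex (· < ·) l m → evalTwo e l < evalTwo e m := by
  intro l m hl hm hlex
  induction hlex with
  | nil => exact evalTwo_pos e _ _
  | @cons a l m _ ih =>
    exact (add_lt_add_iff_left _).mpr (ih hl.tail hm.tail)
  | @rel a l b m hab =>
    have hall : ∀ c ∈ a :: l, c < b := by
      intro c hc
      rcases List.mem_cons.mp hc with rfl | hc
      · exact hab
      · have hpw : List.Pairwise (· > ·) (a :: l) := List.isChain_iff_pairwise.mp hl
        exact lt_trans ((List.pairwise_cons.mp hpw).1 c hc) hab
    calc evalTwo e (a :: l) < 2 ^ e b := evalTwo_bound e he (a :: l) hl b hall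
      _ ≤ evalTwo e (b :: m) := le_self_add

end Aux

/-- If `α` is well-founded (no infinite strictly descending sequence), then so is `2^α`. -/
theorem stmt0 {α : Type*} [LinearOrder α]
    (h : ∀ f : ℕ → α, ¬ ∀ n, f (n + 1) < f n) :
    ∀ F : ℕ → DecList α, ¬ ∀ n, TwoLt (F (n + 1)) (F n) := by
  intro F hF
  have hwf : WellFounded ((· < ·) : α → α → Prop) := by
    rw [RelEmbedding.wellFounded_iff_isEmpty]
    exact ⟨fun f => h f (fun n => f.map_rel_iff.mpr (Nat.lt_succ_self n))⟩
  haveI : WellFoundedLT α := ⟨hwf⟩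
  set e : α → Ordinal := fun a => Ordinal.typein ((· < ·) : α → α → Prop) a with he
  have hmono : StrictMono e := fun a b hab => (Ordinal.typein_lt_typein _).mpr hab
  have hdesc : ∀ n, evalTwo e ((F (n + 1)).1) < evalTwo e ((F n).1) := fun n =>
    evalTwo_strictMono e hmono _ _ (F (n + 1)).2 (F n).2 (hF n)
  exact (RelEmbedding.wellFounded_iff_isEmpty.mp Ordinal.lt_wf).false
    (RelEmbedding.natGT (fun n => evalTwo e ((F n).1)) hdesc)
end

section
/- With L the reverse order on ℕ (i.e., i ≤_L j iff j ≤ i in ℕ), the order D_L(α) coincides with 2^α: the map sending a strictly increasing sequence ⟨x_0,...,x_{n-1}⟩ in α to the strictly decreasing sequence ⟨x_{n-1},...,x_0⟩ is an order isomorphism from D_L(α) onto 2^α. -/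
/-- Finite sequences that are strictly increasing with respect to the relation `lt`. -/
def IncList {α : Type*} (lt : α → α → Prop) : Type _ := {l : List α // l.Chain' lt}

/-- `π` is the family of permutations determined by the linear order `Lle` on `ℕ`:
`π n i ≤ π n j` (in `ℕ`) iff `i ≤_L j`. -/
def PermOf (Lle : ℕ → ℕ → Prop) (π : ∀ n, Equiv.Perm (Fin n)) : Prop :=
  ∀ n, ∀ i j : Fin n, (((π n i : ℕ) ≤ (π n j : ℕ)) ↔ Lle (i : ℕ) (j : ℕ))

/-- The permuted lexicographic strict order on `D_L(α)` determined by the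
permutations `π`:  `σ < τ` iff either the permuted readings first differ at a
position where `σ`'s entry is `lt`-smaller, or the reading of `σ` is a proper
initial segment of that of `τ`. -/
def DLt {α : Type*} (lt : α → α → Prop) (π : ∀ n, Equiv.Perm (Fin n))
    (σ τ : IncList lt) : Prop :=
  (∃ j : ℕ, ∃ hs : j < σ.1.length, ∃ ht : j < τ.1.length,
      lt (σ.1.get (π σ.1.length ⟨j, hs⟩)) (τ.1.get (π τ.1.length ⟨j, ht⟩)) ∧
      ∀ i : ℕ, ∀ his : i < σ.1.length, ∀ hit : i < τ.1.length, i < j →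
        σ.1.get (π σ.1.length ⟨i, his⟩) = τ.1.get (π τ.1.length ⟨i, hit⟩))
  ∨ (σ.1.length < τ.1.length ∧
      ∀ i : ℕ, ∀ his : i < σ.1.length, ∀ hit : i < τ.1.length,
        σ.1.get (π σ.1.length ⟨i, his⟩) = τ.1.get (π τ.1.length ⟨i, hit⟩))

lemma lex_char {α : Type*} [LinearOrder α] (s : List α) : ∀ t : List α,
    List.Lex (· < ·) s t ↔
      ((∃ j : ℕ, ∃ hs : j < s.length, ∃ ht : j < t.length, s[j] < t[j] ∧
          ∀ i : ℕ, ∀ his : i < s.length, ∀ hit : i < t.length, i < j → s[i] = t[i]) ∨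
        (s.length < t.length ∧
          ∀ i : ℕ, ∀ his : i < s.length, ∀ hit : i < t.length, s[i] = t[i])) := by
  induction s with
  | nil =>
    intro t
    cases t with
    | nil => simp [List.not_lex_nil]
    | cons b t => simp [List.Lex.nil]
  | cons a s ih =>
    intro t
    cases t with
    | nil => simp [List.not_lex_nil]
    | cons b t =>
      constructor
      · intro h
        cases h with
        | rel h => exact Or.inl ⟨0, by simp, by simp, by simpa using h, fun i _ _ hi => absurd hi (Nat.not_lt_zero i)⟩
        | cons h =>
          rcases (ih t).1 h with ⟨j, hs, ht, h1, h2⟩ | ⟨h1, h2⟩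
          · refine Or.inl ⟨j + 1, by simpa using hs, by simpa using ht, by simpa using h1, ?_⟩
            intro i his hit hij
            cases i with
            | zero => simp
            | succ i => simpa using h2 i (by simpa using his) (by simpa using hit) (by omega)
          · refine Or.inr ⟨by simpa using h1, ?_⟩
            intro i his hit
            cases i with
            | zero => simp
            | succ i => simpa using h2 i (by simpa using his) (by simpa using hit)
      · rintro (⟨j, hs, ht, h1, h2⟩ | ⟨h1, h2⟩)
        · cases j with
          | zero => exact List.Lex.rel (by simpa using h1)
          | succ j =>
            have hab : a = b := by exact h2 0 (by simp) (by simp) (Nat.succ_pos j)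
            subst hab
            refine List.Lex.cons ((ih t).2 (Or.inl ⟨j, by simpa using hs, by simpa using ht,
              by simpa using h1, ?_⟩))
            intro i his hit hij
            exact h2 (i + 1) (by simpa using his) (by simpa using hit) (by omega)
        · have hab : a = b := by exact h2 0 (by simp) (by simp)
          subst hab
          refine List.Lex.cons ((ih t).2 (Or.inr ⟨by simpa using h1, ?_⟩))
          intro i his hit
          exact h2 (i + 1) (by simpa using his) (by simpa using hit)

/-- When `L` is the reverse order on `ℕ`, the map reversing a strictly increasing
sequence is an order isomorphism from `D_L(α)` onto `2^α`. -/
theorem stmt6 {α : Type*} [LinearOrder α] (π : ∀ n, Equiv.Perm (Fin n))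
    (hπ : PermOf (fun i j => j ≤ i) π) :
    (∀ σ : IncList ((· < ·) : α → α → Prop), σ.1.reverse.Chain' (· > ·)) ∧
    (∀ τ : DecList α, ∃ σ : IncList ((· < ·) : α → α → Prop), σ.1.reverse = τ.1) ∧
    (∀ σ τ : IncList ((· < ·) : α → α → Prop),
      DLt (· < ·) π σ τ ↔ List.Lex (· < ·) σ.1.reverse τ.1.reverse) := by
  have hrev : ∀ n (i : Fin n), π n i = i.rev := by
    intro n i
    let e : Fin n ≃o Fin n :=
      { toEquiv := Fin.revPerm.trans (π n)
        map_rel_iff' := by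
          intro i j
          simp only [Equiv.trans_apply, Fin.revPerm_apply]
          rw [Fin.le_def, hπ n]
          exact (Fin.rev_le_rev (i := j) (j := i)).trans (by rfl) }
    have h := Fin.coe_orderIso_apply e i.rev
    have : π n (i.rev.rev) = i.rev := Fin.ext (by simpa [e, Fin.rev_rev] using h)
    simpa [Fin.rev_rev] using this
  have hget : ∀ (l : List α) (j : ℕ) (h : j < l.length),
      l.get (π l.length ⟨j, h⟩) = l.reverse[j]'(by simpa using h) := by
    intro l j h
    rw [hrev, List.get_eq_getElem, List.getElem_reverse]
    congr 1
    simp [Fin.val_rev]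
    omega
  refine ⟨?_, ?_, ?_⟩
  · intro σ
    exact List.isChain_reverse.2 σ.2
  · intro τ
    refine ⟨⟨τ.1.reverse, ?_⟩, by simp⟩
    exact List.isChain_reverse.2 τ.2
  · intro σ τ
    rw [lex_char]
    unfold DLt
    constructor
    · rintro (⟨j, hs, ht, h1, h2⟩ | ⟨h1, h2⟩)
      · refine Or.inl ⟨j, by simpa using hs, by simpa using ht, ?_, ?_⟩
        · rw [← hget _ _ hs, ← hget _ _ ht]; exact h1
        · intro i his hit hij
          rw [← hget _ _ (by simpa using his), ← hget _ _ (by simpa using hit)]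
          exact h2 i _ _ hij
      · refine Or.inr ⟨by simpa using h1, ?_⟩
        intro i his hit
        rw [← hget _ _ (by simpa using his), ← hget _ _ (by simpa using hit)]
        exact h2 i _ _
    · rintro (⟨j, hs, ht, h1, h2⟩ | ⟨h1, h2⟩)
      · refine Or.inl ⟨j, by simpa using hs, by simpa using ht, ?_, ?_⟩
        · rw [hget _ _ (by simpa using hs), hget _ _ (by simpa using ht)]
          exact h1
        · intro i his hit hij
          rw [hget _ _ his, hget _ _ hit]
          exact h2 i (by simpa using his) (by simpa using hit) hij
      · refine Or.inr ⟨by simpa using h1, ?_⟩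
        intro i his hit
        rw [hget _ _ his, hget _ _ hit]
        exact h2 i (by simpa using his) (by simpa using hit)
end

section
/- Let L = (ℕ, ≤_L) be a linear order and α a well order (well-founded linear order). If D_L(α) contains an infinite strictly descending sequence, then L embeds into α (hence L is well-founded). Consequently, if L is ill-founded then D_L(α) is well-founded for every well order α. -/
/-- The `j`-th entry of the permuted reading of a list. -/
abbrev Vread {α : Type*} (π : ∀ n, Equiv.Perm (Fin n)) (l : List α) (j : ℕ)
    (h : j < l.length) : α :=
  l.get (π l.length ⟨j, h⟩)

/-- A non-increasing sequence in a well-founded linear order is eventually constant. -/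
private lemma eventually_const {α : Type*} [LinearOrder α]
    (hα : WellFounded ((· < ·) : α → α → Prop)) (a : ℕ → α)
    (ha : ∀ n, a (n + 1) ≤ a n) : ∃ N, ∀ n, N ≤ n → a n = a N := by
  have mono : ∀ m n, m ≤ n → a n ≤ a m := by
    intro m n h
    induction n with
    | zero => interval_cases m; rfl
    | succ n ih =>
      rcases Nat.lt_or_ge m (n + 1) with h' | h'
      · exact (ha n).trans (ih (Nat.lt_succ_iff.mp h'))
      · have : m = n + 1 := le_antisymm h h'
        simp [this]
  obtain ⟨_, ⟨N, rfl⟩, hmin⟩ := hα.has_min (Set.range a) ⟨a 0, 0, rfl⟩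
  exact ⟨N, fun n hn => le_antisymm (mono N n hn) (not_lt.mp (hmin (a n) ⟨n, rfl⟩))⟩

private lemma main_embed {α : Type*} [LinearOrder α] (Lle : ℕ → ℕ → Prop)
    (π : ∀ n, Equiv.Perm (Fin n)) (hπ : PermOf Lle π)
    (hα : WellFounded ((· < ·) : α → α → Prop))
    (f : ℕ → IncList ((· < ·) : α → α → Prop))
    (hf : ∀ n, DLt (· < ·) π (f (n + 1)) (f n)) :
    ∃ e : ℕ → α, ∀ i j : ℕ, Lle i j ↔ e i ≤ e j := by
  -- comparison of entries within a single list
  have key : ∀ n : ℕ, ∀ i j : Fin (f n).1.length,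
      ((f n).1.get ((π _) i) ≤ (f n).1.get ((π _) j) ↔ Lle i j) := by
    intro n i j
    have sm : StrictMono (fun i => (f n).1.get i) := by
      intro a b hab
      exact List.pairwise_iff_get.mp (List.isChain_iff_pairwise.mp (f n).2) a b hab
    rw [sm.le_iff_le]
    exact hπ _ i j
  have vcongr : ∀ n m j, n = m → ∀ h1 h2,
      Vread π (f n).1 j h1 = Vread π (f m).1 j h2 := by
    rintro n m j rfl h1 h2; rfl
  have pos : ∀ n, 0 < (f n).1.length := by
    intro n
    rcases hf n with ⟨j, hs, ht, _⟩ | ⟨h, _⟩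
    · exact lt_of_le_of_lt (Nat.zero_le j) ht
    · exact lt_of_le_of_lt (Nat.zero_le _) h
  -- stabilization of the first k positions of the reading
  have R : ∀ k : ℕ, ∃ N : ℕ, ∀ n, N ≤ n → (k < (f n).1.length) ∧
      ∀ m, N ≤ m → ∀ j, j < k → ∀ hjn hjm,
        Vread π (f n).1 j hjn = Vread π (f m).1 j hjm := by
    intro k
    induction k with
    | zero => exact ⟨0, fun n _ => ⟨pos n, fun m _ j hj => absurd hj (Nat.not_lt_zero j)⟩⟩
    | succ k ih =>
      obtain ⟨N, hN⟩ := ih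
      set a : ℕ → α := fun i => Vread π (f (N + i)).1 k (hN (N + i) (Nat.le_add_right N i)).1
        with ha
      have mono : ∀ i, a (i + 1) ≤ a i := by
        intro i
        rcases hf (N + i) with ⟨j, hs, ht, hlt, heq⟩ | ⟨hlen, heq⟩
        · rcases lt_trichotomy j k with hj | hj | hj
          · -- impossible: entries at position j < k agree
            have := (hN (N + i + 1) (by omega)).2 (N + i) (by omega) j hj hs ht
            exact absurd this (ne_of_lt hlt)
          · subst hj
            exact le_of_lt hlt
          · exact le_of_eq ((heq k (hN (N + i + 1) (by omega)).1
              (hN (N + i) (by omega)).1 hj))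
        · exact le_of_eq (heq k (hN (N + i + 1) (by omega)).1 (hN (N + i) (by omega)).1)
      obtain ⟨M, hM⟩ := eventually_const hα a mono
      refine ⟨N + M, fun n hn => ⟨?_, ?_⟩⟩
      · -- lengths are at least k + 2 from N + M on
        by_contra hcon
        have hlen : (f n).1.length = k + 1 := by
          have := (hN n (by omega)).1; omega
        rcases hf n with ⟨j, hs, ht, hlt, _⟩ | ⟨hl, _⟩
        · have hjk : j ≤ k := by omega
          rcases Nat.lt_or_ge j k with hj | hj
          · have := (hN (n + 1) (by omega)).2 n (by omega) j hj hs ht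
            exact absurd this (ne_of_lt hlt)
          · have hj : j = k := le_antisymm hjk hj
            subst hj
            -- position k is stable past N + M
            have e1 : Vread π (f (n + 1)).1 j hs = a ((n + 1) - N) :=
              vcongr _ _ j (by omega) _ _
            have e2 : Vread π (f n).1 j ht = a (n - N) :=
              vcongr _ _ j (by omega) _ _
            have : Vread π (f (n + 1)).1 j hs = Vread π (f n).1 j ht := by
              rw [e1, e2, hM ((n + 1) - N) (by omega), hM (n - N) (by omega)]
            exact absurd this (ne_of_lt hlt)
        · have := (hN (n + 1) (by omega)).1
          omega
      · intro m hm j hj hjn hjm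
        rcases Nat.lt_or_ge j k with hj' | hj'
        · exact (hN n (by omega)).2 m (by omega) j hj' hjn hjm
        · have hj' : j = k := by omega
          subst hj'
          have e1 : Vread π (f n).1 j hjn = a (n - N) := vcongr _ _ j (by omega) _ _
          have e2 : Vread π (f m).1 j hjm = a (m - N) := vcongr _ _ j (by omega) _ _
          rw [e1, e2, hM (n - N) (by omega), hM (m - N) (by omega)]
  choose N hN using R
  set e : ℕ → α := fun k => Vread π (f (N (k + 1))).1 k
    (lt_trans (Nat.lt_succ_self k) (hN (k + 1) _ le_rfl).1) with hedef
  refine ⟨e, fun i j => ?_⟩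
  set K := max i j + 1 with hK
  set M := max (N K) (max (N (i + 1)) (N (j + 1))) with hMdef
  have hMK : N K ≤ M := le_max_left _ _
  have hMi : N (i + 1) ≤ M := le_trans (le_max_left _ _) (le_max_right _ _)
  have hMj : N (j + 1) ≤ M := le_trans (le_max_right _ _) (le_max_right _ _)
  have hKM : K < (f M).1.length := (hN K M hMK).1
  have hiM : i < (f M).1.length := lt_trans (Nat.lt_succ_of_le (le_max_left i j)) hKM
  have hjM : j < (f M).1.length := lt_trans (Nat.lt_succ_of_le (le_max_right i j)) hKM
  have ei : e i = Vread π (f M).1 i hiM :=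
    (hN (i + 1) (N (i + 1)) le_rfl).2 M hMi i (Nat.lt_succ_self i) _ _
  have ej : e j = Vread π (f M).1 j hjM :=
    (hN (j + 1) (N (j + 1)) le_rfl).2 M hMj j (Nat.lt_succ_self j) _ _
  rw [ei, ej]
  exact (key M ⟨i, hiM⟩ ⟨j, hjM⟩).symm

/-- If `α` is a well order and `D_L(α)` contains an infinite strictly descending
sequence, then `L` embeds into `α`.  Consequently, if `L` is ill-founded then
`D_L(α)` is well-founded. -/
theorem stmt7 {α : Type*} [LinearOrder α] (Lle : ℕ → ℕ → Prop)
    (hL : IsLinearOrder ℕ Lle) (π : ∀ n, Equiv.Perm (Fin n)) (hπ : PermOf Lle π)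
    (hα : WellFounded ((· < ·) : α → α → Prop)) :
    (∀ f : ℕ → IncList ((· < ·) : α → α → Prop),
        (∀ n, DLt (· < ·) π (f (n + 1)) (f n)) →
        ∃ e : ℕ → α, ∀ i j : ℕ, Lle i j ↔ e i ≤ e j) ∧
    ((∃ g : ℕ → ℕ, ∀ n, Lle (g (n + 1)) (g n) ∧ g (n + 1) ≠ g n) →
        ∀ f : ℕ → IncList ((· < ·) : α → α → Prop),
          ¬ ∀ n, DLt (· < ·) π (f (n + 1)) (f n)) := by
  constructor
  · intro f hfd
    exact main_embed Lle π hπ hα f hfd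
  · rintro ⟨g, hg⟩ f hfd
    obtain ⟨e, he⟩ := main_embed Lle π hπ hα f hfd
    obtain ⟨_, ⟨m, rfl⟩, hmin⟩ := hα.has_min (Set.range (fun n => e (g n))) ⟨_, 0, rfl⟩
    have h1 : e (g (m + 1)) ≤ e (g m) := (he _ _).1 (hg m).1
    have h2 : ¬ e (g (m + 1)) < e (g m) := hmin _ ⟨m + 1, rfl⟩
    have h3 : e (g (m + 1)) = e (g m) := le_antisymm h1 (not_lt.mp h2)
    have h4 : Lle (g m) (g (m + 1)) := (he _ _).2 (le_of_eq h3.symm)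
    exact (hg m).2 (hL.toIsPartialOrder.toAntisymm.antisymm _ _ (hg m).1 h4)
end

section
/- Let L = (ℕ, ≤_L) be a well-founded linear order. Then D_L(2·L) is ill-founded: the sequence of increasing maps σ_n : {0,...,n} → 2·L defined by σ_n(π_{n+1}(i)) = 2·i for i < n and σ_n(π_{n+1}(n)) = 2·i+1 for i = n forms an infinite strictly descending sequence in D_L(2·L). In particular, if L is well-founded then D_L does not preserve well-foundedness. -/
/-- The strict order `2·L`: elements `2x+k` (`x ∈ L`, `k ∈ {0,1}`), compared by
`x` first (in `L`) and then by `k`. -/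
def TwoLLt (Lle : ℕ → ℕ → Prop) (p q : ℕ × Bool) : Prop :=
  (Lle p.1 q.1 ∧ ¬ Lle q.1 p.1) ∨ (p.1 = q.1 ∧ p.2 < q.2)

/-- If `L` is well-founded, then `D_L(2·L)` is ill-founded: `2·L` is a well order,
yet the sequence `σ_n` with `σ_n(π_{n+1}(i)) = 2·i` for `i < n` and
`σ_n(π_{n+1}(n)) = 2·n+1` is strictly descending in `D_L(2·L)`. -/
theorem stmt8 (Lle : ℕ → ℕ → Prop) (hL : IsLinearOrder ℕ Lle)
    (π : ∀ n, Equiv.Perm (Fin n)) (hπ : PermOf Lle π)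
    (hwf : WellFounded (fun i j => Lle i j ∧ ¬ Lle j i)) :
    WellFounded (TwoLLt Lle) ∧
    ∃ f : ℕ → IncList (TwoLLt Lle), ∃ hl : ∀ n, (f n).1.length = n + 1,
      (∀ n : ℕ, ∀ i : ℕ, ∀ h : i < n + 1,
        (f n).1.get (Fin.cast (hl n).symm (π (n + 1) ⟨i, h⟩)) = (i, decide (i = n))) ∧
      (∀ n, DLt (TwoLLt Lle) π (f (n + 1)) (f n)) := by
  have picast : ∀ {m m' : ℕ} (e : m' = m) (x : Fin m'),
      π m (Fin.cast e x) = Fin.cast e (π m' x) := by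
    intro m m' e x; subst e; rfl
  constructor
  · -- well-foundedness of TwoLLt
    have hb : WellFounded ((· < ·) : Bool → Bool → Prop) := IsWellFounded.wf
    refine Subrelation.wf ?_ (WellFounded.prod_lex hwf hb)
    rintro ⟨a, b⟩ ⟨c, d⟩ (⟨h1, h2⟩ | ⟨h1, h2⟩)
    · exact Prod.Lex.left _ _ ⟨h1, h2⟩
    · dsimp at h1 h2; subst h1; exact Prod.Lex.right _ h2
  · -- the descending sequence
    set g : ∀ n, Fin (n + 1) → ℕ × Bool := fun n p =>
      ((((π (n + 1)).symm p : Fin (n+1)) : ℕ),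
        decide ((((π (n + 1)).symm p : Fin (n+1)) : ℕ) = n)) with hg
    -- strict inequality of first components along list order
    have hkey : ∀ n (p q : Fin (n + 1)), (p : ℕ) < (q : ℕ) →
        TwoLLt Lle (g n p) (g n q) := by
      intro n p q hpq
      set a := (π (n + 1)).symm p with ha
      set b := (π (n + 1)).symm q with hb
      have hap : π (n + 1) a = p := (π (n+1)).apply_symm_apply p
      have hbq : π (n + 1) b = q := (π (n+1)).apply_symm_apply q
      have hnba : ¬ Lle (b : ℕ) (a : ℕ) := by
        rw [← hπ (n + 1) b a, hap, hbq]; omega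
      have hab : Lle (a : ℕ) (b : ℕ) := by
        rw [← hπ (n + 1) a b, hap, hbq]; omega
      exact Or.inl ⟨hab, hnba⟩
    have hchain : ∀ n, (List.ofFn (g n)).Chain' (TwoLLt Lle) := by
      intro n
      show (List.ofFn (g n)).IsChain (TwoLLt Lle)
      rw [List.isChain_ofFn]
      intro i h
      exact hkey n _ _ (by simp)
    set f : ℕ → IncList (TwoLLt Lle) := fun n => ⟨List.ofFn (g n), hchain n⟩ with hf
    have hl : ∀ n, (f n).1.length = n + 1 := fun n => List.length_ofFn (f := g n)
    have hget : ∀ n : ℕ, ∀ i : ℕ, ∀ h : i < n + 1,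
        (f n).1.get (Fin.cast (hl n).symm (π (n + 1) ⟨i, h⟩)) = (i, decide (i = n)) := by
      intro n i h
      show (List.ofFn (g n)).get _ = _
      rw [List.get_ofFn]
      have : Fin.cast (List.length_ofFn (f := g n)) (Fin.cast (hl n).symm (π (n + 1) ⟨i, h⟩))
          = π (n + 1) ⟨i, h⟩ := by ext; simp
      rw [this, hg]
      simp
    -- gets without cast
    have hget' : ∀ n : ℕ, ∀ i : ℕ, ∀ h : i < (f n).1.length,
        (f n).1.get (π (f n).1.length ⟨i, h⟩) = (i, decide (i = n)) := by
      intro n i h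
      have h' : i < n + 1 := by rw [← hl n]; exact h
      have e : (⟨i, h⟩ : Fin (f n).1.length) = Fin.cast (hl n).symm ⟨i, h'⟩ := rfl
      rw [e, picast (hl n).symm]
      exact hget n i h'
    refine ⟨f, hl, hget, ?_⟩
    intro n
    left
    refine ⟨n, by rw [hl]; omega, by rw [hl]; omega, ?_, ?_⟩
    · rw [hget' (n+1) n _, hget' n n _]
      simp only [decide_eq_true_eq]
      right
      constructor
      · rfl
      · simp
    · intro i his hit hi
      rw [hget' (n+1) i _, hget' n i _]
      have : ¬ (i = n + 1) := by omega
      have : ¬ (i = n) := by omega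
      simp_all
end

section
/- For arbitrary linear orders L = (ℕ, ≤_L) and γ, there is an order embedding of (1+α)^γ into D_L(α · 2^γ) for every linear order α. -/
/-- `(1+α)^γ`: finite sequences of pairs `(x,y)` with strictly decreasing first
components in `γ`, compared lexicographically (earlier pairs have priority). -/
def EList (γ α : Type*) [LinearOrder γ] : Type _ :=
  {l : List (γ × α) // (l.map Prod.fst).Chain' (· > ·)}

/-- The lexicographic order on `(1+α)^γ`. -/
def ELt {γ α : Type*} [LinearOrder γ] [LinearOrder α] (σ τ : EList γ α) : Prop :=
  List.Lex (fun p q => p.1 < q.1 ∨ (p.1 = q.1 ∧ p.2 < q.2)) σ.1 τ.1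

/-- The strict order on `α · 2^γ` (pairs with the `2^γ` component taking priority). -/
def ProdLt {γ α : Type*} [LinearOrder γ] [LinearOrder α]
    (p q : DecList γ × α) : Prop :=
  TwoLt p.1 q.1 ∨ (p.1 = q.1 ∧ p.2 < q.2)


open scoped Classical

theorem List.chain'_iff_pairwise {β : Type*} [LinearOrder β] {l : List β} :
    l.Chain' (· > ·) ↔ l.Pairwise (· > ·) := List.isChain_iff_pairwise

theorem List.get_map {β δ : Type*} (f : β → δ) {l : List β} {n : Fin (l.map f).length} :
    (l.map f).get n = f (l.get ⟨n, by simpa using n.2⟩) := by simp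

theorem List.chain'_iff_get {β : Type*} {R : β → β → Prop} {l : List β} :
    l.Chain' R ↔ ∀ (i : ℕ) (h : i < l.length - 1),
      R (l.get ⟨i, by omega⟩) (l.get ⟨i + 1, by omega⟩) := by
  show List.IsChain R l ↔ _
  simp only [List.isChain_iff_getElem, List.get_eq_getElem]
  exact ⟨fun h i hi => h i (by omega), fun h i hi => h i (by omega)⟩

/-- Select elements of a list at the positions satisfying `S`. -/
noncomputable def sel {β : Type*} (S : ℕ → Prop) : List β → List β
  | [] => []
  | a :: l => (if S 0 then [a] else []) ++ sel (fun k => S (k+1)) l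

theorem sel_sublist {β : Type*} (S : ℕ → Prop) (l : List β) : (sel S l).Sublist l := by
  induction l generalizing S with
  | nil => simp [sel]
  | cons a t ih =>
    by_cases h : S 0 <;> simp [sel, h]
    · exact ih _
    · exact List.Sublist.cons a (ih _)

theorem sel_chain {β : Type*} [LinearOrder β] {S : ℕ → Prop} {l : List β}
    (hl : l.Chain' (· > ·)) : (sel S l).Chain' (· > ·) :=
  List.chain'_iff_pairwise.2 ((List.chain'_iff_pairwise.1 hl).sublist (sel_sublist S l))

theorem sel_eq_nil {β : Type*} {S : ℕ → Prop} {l : List β}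
    (h : ∀ k, k < l.length → ¬ S k) : sel S l = [] := by
  induction l generalizing S with
  | nil => rfl
  | cons a t ih =>
    simp only [sel, if_neg (h 0 (by simp))]
    exact ih fun k hk => h (k+1) (by simpa using hk)

theorem sel_congr_pred {β : Type*} {S T : ℕ → Prop} (l : List β)
    (h : ∀ k, S k ↔ T k) : sel S l = sel T l := by
  induction l generalizing S T with
  | nil => rfl
  | cons a t ih => simp only [sel, if_congr (h 0) rfl rfl, ih fun k => h (k+1)]

theorem sel_congr_val {β : Type*} {S : ℕ → Prop} {l l' : List β}
    (h : ∀ k, S k → ∃ (h1 : k < l.length) (h2 : k < l'.length), l.get ⟨k, h1⟩ = l'.get ⟨k, h2⟩) :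
    sel S l = sel S l' := by
  induction l generalizing S l' with
  | nil =>
    refine (sel_eq_nil ?_).symm
    intro k _ hS
    obtain ⟨h1, -⟩ := h k hS
    simp at h1
  | cons a t ih =>
    cases l' with
    | nil =>
      refine sel_eq_nil ?_
      intro k _ hS
      obtain ⟨-, h2, -⟩ := h k hS
      simp at h2
    | cons a' t' =>
      by_cases h0 : S 0
      · obtain ⟨h1, h2, he⟩ := h 0 h0
        simp only [List.get] at he
        simp only [sel, if_pos h0, he]
        congr 1
        exact ih fun k hS => by
          obtain ⟨h1, h2, he⟩ := h (k+1) hS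
          exact ⟨by simpa using h1, by simpa using h2, he⟩
      · simp only [sel, if_neg h0, List.nil_append]
        exact ih fun k hS => by
          obtain ⟨h1, h2, he⟩ := h (k+1) hS
          exact ⟨by simpa using h1, by simpa using h2, he⟩

theorem sel_eq_append {β : Type*} {S : ℕ → Prop} {l : List β} {m : ℕ}
    (hm : m < l.length) (hS : S m) (htop : ∀ k, m < k → ¬ S k) :
    sel S l = sel (fun k => S k ∧ k < m) l ++ [l.get ⟨m, hm⟩] := by
  induction l generalizing S m with
  | nil => simp at hm
  | cons a t ih =>
    cases m with
    | zero =>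
      have h1 : sel (fun k => S (k+1)) t = [] :=
        sel_eq_nil fun k _ => htop (k+1) (by omega)
      have h2 : sel (fun k => S k ∧ k < 0) (a :: t) = [] :=
        sel_eq_nil fun k _ h => by omega
      rw [h2]
      simp only [sel, if_pos hS, h1]
      simp [List.get]
    | succ m =>
      have hmt : m < t.length := by simpa using hm
      have step : sel (fun k => S (k+1)) t
          = sel (fun k => S (k+1) ∧ k < m) t ++ [t.get ⟨m, hmt⟩] :=
        ih hmt hS fun k hk => htop (k+1) (by omega)
      have pc : sel (fun k => S (k+1) ∧ k < m) t
          = sel (fun k => (S (k+1) ∧ k + 1 < m + 1)) t :=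
        sel_congr_pred t fun k => by constructor <;> exact fun ⟨u, v⟩ => ⟨u, by omega⟩
      by_cases h0 : S 0
      · simp only [sel, if_pos h0, show (S 0 ∧ 0 < m + 1) = S 0 from by simp [h0],
          step, pc, List.get]
        simp
      · simp only [sel, if_neg h0, show (S 0 ∧ 0 < m + 1) = S 0 from by simp [h0],
          step, pc, List.get]
        simp

theorem sel_lex {β : Type*} [LinearOrder β] {S T : ℕ → Prop} {l : List β}
    (hl : l.Chain' (· > ·)) {d : ℕ} (hd : d < l.length) (hT : T d) (hS : ¬ S d)
    (hag : ∀ k, k < d → (S k ↔ T k)) :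
    List.Lex (· < ·) (sel S l) (sel T l) := by
  induction l generalizing S T d with
  | nil => simp at hd
  | cons a t ih =>
    have hhead : ∀ b ∈ t, b < a := by
      have := List.pairwise_cons.1 (List.chain'_iff_pairwise.1 hl)
      exact fun b hb => this.1 b hb
    have htc : t.Chain' (· > ·) := hl.tail
    cases d with
    | zero =>
      simp only [sel, if_pos hT, if_neg hS, List.nil_append]
      cases hsel : sel (fun k => S (k+1)) t with
      | nil => exact List.Lex.nil
      | cons c u =>
        have hc : c ∈ t := (sel_sublist _ t).subset (hsel ▸ (List.mem_cons_self : c ∈ c :: u))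
        exact List.Lex.rel (hhead c hc)
    | succ d =>
      have h0 : S 0 ↔ T 0 := hag 0 (by omega)
      have hdt : d < t.length := by simpa using hd
      have ihh := ih (S := fun k => S (k+1)) (T := fun k => T (k+1)) htc hdt hT hS
        (fun k hk => hag (k+1) (by omega))
      by_cases h : S 0
      · simp only [sel, if_pos h, if_pos (h0.1 h), List.cons_append, List.nil_append]
        exact List.Lex.cons ihh
      · simp only [sel, if_neg h, if_neg (fun hT0 => h (h0.2 hT0)), List.nil_append]
        exact ihh

theorem lex_append_singleton {β : Type*} [LinearOrder β] {Q : List β} {a b : β} :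
    List.Lex (· < ·) (Q ++ [a]) (Q ++ [b]) ↔ a < b := by
  induction Q with
  | nil =>
    constructor
    · intro h
      cases h with
      | rel h => exact h
      | cons h => cases h
    · exact fun h => List.Lex.rel h
  | cons c Q ih =>
    rw [List.cons_append, List.cons_append]
    constructor
    · intro h
      cases h with
      | rel h => exact absurd h (lt_irrefl c)
      | cons h => exact ih.1 h
    · exact fun h => List.Lex.cons (ih.2 h)

/-- Characterization of lexicographic order by indices. -/
theorem lex_char_s10 {β : Type*} (r : β → β → Prop) (s t : List β) :
    List.Lex r s t ↔
      (∃ (j : ℕ) (h1 : j < s.length) (h2 : j < t.length),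
        r (s.get ⟨j, h1⟩) (t.get ⟨j, h2⟩) ∧
        ∀ i (hi1 : i < s.length) (hi2 : i < t.length), i < j →
          s.get ⟨i, hi1⟩ = t.get ⟨i, hi2⟩)
      ∨ (s.length < t.length ∧
        ∀ i (hi1 : i < s.length) (hi2 : i < t.length), s.get ⟨i, hi1⟩ = t.get ⟨i, hi2⟩) := by
  induction s generalizing t with
  | nil =>
    cases t with
    | nil =>
      simp only [List.length_nil]
      constructor
      · intro h; cases h
      · rintro (⟨j, h1, -⟩ | ⟨h1, -⟩) <;> omega
    | cons b t =>
      simp only [List.length_nil, List.length_cons]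
      constructor
      · intro _
        exact Or.inr ⟨by omega, fun i hi1 hi2 => by omega⟩
      · intro _
        exact List.Lex.nil
  | cons a s ih =>
    cases t with
    | nil =>
      constructor
      · intro h; cases h
      · rintro (⟨j, h1, h2, -⟩ | ⟨h1, -⟩)
        · simp at h2
        · simp at h1
    | cons b t =>
      have key : List.Lex r (a :: s) (b :: t) ↔ r a b ∨ (a = b ∧ List.Lex r s t) := by
        constructor
        · intro h
          cases h with
          | rel h => exact Or.inl h
          | cons h => exact Or.inr ⟨rfl, h⟩
        · rintro (h | ⟨rfl, h⟩)
          · exact List.Lex.rel h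
          · exact List.Lex.cons h
      rw [key, ih t]
      constructor
      · rintro (h | ⟨rfl, (⟨j, h1, h2, hr, hag⟩ | ⟨h1, hag⟩)⟩)
        · exact Or.inl ⟨0, by simp, by simp, h, fun i hi1 hi2 hij => by omega⟩
        · refine Or.inl ⟨j+1, by simpa using h1, by simpa using h2, hr, ?_⟩
          intro i hi1 hi2 hij
          cases i with
          | zero => rfl
          | succ i => exact hag i (by simpa using hi1) (by simpa using hi2) (by omega)
        · refine Or.inr ⟨by simpa using h1, ?_⟩
          intro i hi1 hi2
          cases i with
          | zero => rfl
          | succ i => exact hag i (by simpa using hi1) (by simpa using hi2)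
      · rintro (⟨j, h1, h2, hr, hag⟩ | ⟨h1, hag⟩)
        · cases j with
          | zero => exact Or.inl hr
          | succ j =>
            have hab : a = b := hag 0 (by simp) (by simp) (by omega)
            refine Or.inr ⟨hab, Or.inl ⟨j, by simpa using h1, by simpa using h2, hr, ?_⟩⟩
            intro i hi1 hi2 hij
            exact hag (i+1) (by simpa using hi1) (by simpa using hi2) (by omega)
        · have hab : a = b := hag 0 (by simp) (by simp)
          refine Or.inr ⟨hab, Or.inr ⟨by simpa using h1, ?_⟩⟩
          intro i hi1 hi2
          exact hag (i+1) (by simpa using hi1) (by simpa using hi2)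

/-- The index set used for the `j`-th entry: `{k ≤ j : k ≤_L j}`. -/
def Apred (Lle : ℕ → ℕ → Prop) (j : ℕ) : ℕ → Prop := fun k => k ≤ j ∧ Lle k j

theorem apred_lex {β : Type*} [LinearOrder β] {Lle : ℕ → ℕ → Prop}
    (hL : IsLinearOrder ℕ Lle) {l : List β} (hl : l.Chain' (· > ·))
    {i j : ℕ} (hij : i ≠ j) (hLij : Lle i j) (hj : j < l.length) :
    List.Lex (· < ·) (sel (Apred Lle i) l) (sel (Apred Lle j) l) := by
  have hwit : ¬ (Apred Lle i j ↔ Apred Lle j j) := by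
    intro hiff
    have : Apred Lle i j := hiff.2 ⟨le_refl j, hL.refl j⟩
    exact hij (hL.antisymm i j hLij this.2)
  have hex : ∃ k, ¬ (Apred Lle i k ↔ Apred Lle j k) := ⟨j, hwit⟩
  classical
  set d := Nat.find hex with hdd
  have hdspec : ¬ (Apred Lle i d ↔ Apred Lle j d) := Nat.find_spec hex
  have hdj : d ≤ j := Nat.find_le hwit
  have hnAi : ¬ Apred Lle i d := by
    rintro ⟨hdi, hLdi⟩
    by_cases hAj : Apred Lle j d
    · exact hdspec ⟨fun _ => hAj, fun _ => ⟨hdi, hLdi⟩⟩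
    · have hnLdj : ¬ Lle d j := fun h => hAj ⟨hdj, h⟩
      have hLjd : Lle j d := (hL.total j d).resolve_right hnLdj
      have : Lle j i := hL.trans j d i hLjd hLdi
      exact hij (hL.antisymm i j hLij this)
  have hAj : Apred Lle j d := by
    by_contra hAj
    exact hdspec ⟨fun h => absurd h hnAi, fun h => absurd h hAj⟩
  exact sel_lex hl (lt_of_le_of_lt hdj hj) hAj hnAi
    (fun k hk => not_not.1 (Nat.find_min hex hk))

/-- The `j`-th entry of the embedded sequence. -/
noncomputable def entPair {γ α : Type*} [LinearOrder γ] (Lle : ℕ → ℕ → Prop)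
    (l : List (γ × α)) (hl : (l.map Prod.fst).Chain' (· > ·)) (j : ℕ) (h : j < l.length) :
    DecList γ × α :=
  (⟨sel (Apred Lle j) (l.map Prod.fst), sel_chain hl⟩, (l.get ⟨j, h⟩).2)

theorem ent_cmp {γ α : Type*} [LinearOrder γ] [LinearOrder α] {Lle : ℕ → ℕ → Prop}
    (hL : IsLinearOrder ℕ Lle) {l₁ l₂ : List (γ × α)}
    (hl₁ : (l₁.map Prod.fst).Chain' (· > ·)) (hl₂ : (l₂.map Prod.fst).Chain' (· > ·))
    {j : ℕ} (h₁ : j < l₁.length) (h₂ : j < l₂.length)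
    (hag : ∀ i (hi₁ : i < l₁.length) (hi₂ : i < l₂.length), i < j →
      l₁.get ⟨i, hi₁⟩ = l₂.get ⟨i, hi₂⟩) :
    (ProdLt (entPair Lle l₁ hl₁ j h₁) (entPair Lle l₂ hl₂ j h₂) ↔
      ((l₁.get ⟨j, h₁⟩).1 < (l₂.get ⟨j, h₂⟩).1 ∨
        ((l₁.get ⟨j, h₁⟩).1 = (l₂.get ⟨j, h₂⟩).1 ∧ (l₁.get ⟨j, h₁⟩).2 < (l₂.get ⟨j, h₂⟩).2)))
    ∧ (entPair Lle l₁ hl₁ j h₁ = entPair Lle l₂ hl₂ j h₂ ↔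
        l₁.get ⟨j, h₁⟩ = l₂.get ⟨j, h₂⟩) := by
  have hm₁ : j < (l₁.map Prod.fst).length := by simpa using h₁
  have hm₂ : j < (l₂.map Prod.fst).length := by simpa using h₂
  have e₁ : sel (Apred Lle j) (l₁.map Prod.fst)
      = sel (fun k => Apred Lle j k ∧ k < j) (l₁.map Prod.fst) ++ [(l₁.get ⟨j, h₁⟩).1] := by
    have := sel_eq_append (S := Apred Lle j) (l := l₁.map Prod.fst) hm₁
      ⟨le_refl j, hL.refl j⟩ (fun k hk hS => by exact absurd hS.1 (by omega))
    rwa [List.get_map] at this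
  have e₂ : sel (Apred Lle j) (l₂.map Prod.fst)
      = sel (fun k => Apred Lle j k ∧ k < j) (l₂.map Prod.fst) ++ [(l₂.get ⟨j, h₂⟩).1] := by
    have := sel_eq_append (S := Apred Lle j) (l := l₂.map Prod.fst) hm₂
      ⟨le_refl j, hL.refl j⟩ (fun k hk hS => by exact absurd hS.1 (by omega))
    rwa [List.get_map] at this
  have hQ : sel (fun k => Apred Lle j k ∧ k < j) (l₁.map Prod.fst)
      = sel (fun k => Apred Lle j k ∧ k < j) (l₂.map Prod.fst) := by
    refine sel_congr_val fun k hS => ?_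
    have hk : k < j := hS.2
    refine ⟨by simpa using lt_of_lt_of_le hk (le_of_lt h₁), by simpa using lt_of_lt_of_le hk (le_of_lt h₂), ?_⟩
    rw [List.get_map, List.get_map]
    exact congrArg Prod.fst (hag k (by omega) (by omega) hk)
  set Q := sel (fun k => Apred Lle j k ∧ k < j) (l₁.map Prod.fst) with hQdef
  have hsub : (⟨sel (Apred Lle j) (l₁.map Prod.fst), sel_chain hl₁⟩ : DecList γ)
      = ⟨sel (Apred Lle j) (l₂.map Prod.fst), sel_chain hl₂⟩ ↔
      (l₁.get ⟨j, h₁⟩).1 = (l₂.get ⟨j, h₂⟩).1 := by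
    rw [Subtype.mk_eq_mk, e₁, e₂, ← hQ]
    constructor
    · intro hh
      simpa using List.append_cancel_left hh
    · intro hh
      rw [hh]
  have hlex : TwoLt (⟨sel (Apred Lle j) (l₁.map Prod.fst), sel_chain hl₁⟩ : DecList γ)
      ⟨sel (Apred Lle j) (l₂.map Prod.fst), sel_chain hl₂⟩ ↔
      (l₁.get ⟨j, h₁⟩).1 < (l₂.get ⟨j, h₂⟩).1 := by
    unfold TwoLt
    simp only
    rw [e₁, e₂, ← hQ]
    exact lex_append_singleton
  constructor
  · constructor
    · rintro (h | ⟨hh, hy⟩)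
      · exact Or.inl (hlex.1 h)
      · exact Or.inr ⟨hsub.1 hh, hy⟩
    · rintro (h | ⟨hh, hy⟩)
      · exact Or.inl (hlex.2 h)
      · exact Or.inr ⟨hsub.2 hh, hy⟩
  · constructor
    · intro hh
      have h2 : (entPair Lle l₁ hl₁ j h₁).2 = (entPair Lle l₂ hl₂ j h₂).2 :=
        congrArg Prod.snd hh
      exact Prod.ext (hsub.1 (congrArg Prod.fst hh)) h2
    · intro hh
      have h2 : (l₁.get ⟨j, h₁⟩).2 = (l₂.get ⟨j, h₂⟩).2 := congrArg Prod.snd hh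
      exact Prod.ext (hsub.2 (congrArg Prod.fst hh)) h2


theorem ent_agree {γ α : Type*} [LinearOrder γ] [LinearOrder α] {Lle : ℕ → ℕ → Prop}
    (hL : IsLinearOrder ℕ Lle) {l₁ l₂ : List (γ × α)}
    (hl₁ : (l₁.map Prod.fst).Chain' (· > ·)) (hl₂ : (l₂.map Prod.fst).Chain' (· > ·))
    (j : ℕ) (hj₁ : j ≤ l₁.length) (hj₂ : j ≤ l₂.length) :
    (∀ i (hi₁ : i < l₁.length) (hi₂ : i < l₂.length), i < j →
        l₁.get ⟨i, hi₁⟩ = l₂.get ⟨i, hi₂⟩) ↔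
    (∀ i (hi₁ : i < l₁.length) (hi₂ : i < l₂.length), i < j →
        entPair Lle l₁ hl₁ i hi₁ = entPair Lle l₂ hl₂ i hi₂) := by
  induction j using Nat.strong_induction_on with
  | _ j ih =>
    constructor
    · intro h i hi₁ hi₂ hij
      exact ((ent_cmp hL hl₁ hl₂ hi₁ hi₂
        (fun k hk₁ hk₂ hk => h k hk₁ hk₂ (hk.trans hij))).2).2 (h i hi₁ hi₂ hij)
    · intro h i hi₁ hi₂ hij
      have hpairs : ∀ k (hk₁ : k < l₁.length) (hk₂ : k < l₂.length), k < i →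
          l₁.get ⟨k, hk₁⟩ = l₂.get ⟨k, hk₂⟩ :=
        (ih i hij (le_of_lt hi₁) (le_of_lt hi₂)).2
          (fun k hk₁ hk₂ hk => h k hk₁ hk₂ (hk.trans hij))
      exact ((ent_cmp hL hl₁ hl₂ hi₁ hi₂ hpairs).2).1 (h i hi₁ hi₂ hij)

theorem dlt_char {β : Type*} (lt : β → β → Prop) (π : ∀ n, Equiv.Perm (Fin n))
    (s t : IncList lt) (ns nt : ℕ) (hs : s.1.length = ns) (ht : t.1.length = nt)
    (F : (j : ℕ) → j < ns → β) (G : (j : ℕ) → j < nt → β)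
    (hF : ∀ j (h : j < ns) (h' : j < s.1.length), s.1.get (π s.1.length ⟨j, h'⟩) = F j h)
    (hG : ∀ j (h : j < nt) (h' : j < t.1.length), t.1.get (π t.1.length ⟨j, h'⟩) = G j h) :
    DLt lt π s t ↔
      ((∃ (j : ℕ) (h1 : j < ns) (h2 : j < nt), lt (F j h1) (G j h2) ∧
        ∀ i (hi1 : i < ns) (hi2 : i < nt), i < j → F i hi1 = G i hi2)
      ∨ (ns < nt ∧ ∀ i (hi1 : i < ns) (hi2 : i < nt), F i hi1 = G i hi2)) := by
  subst hs; subst ht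
  unfold DLt
  constructor
  · rintro (⟨j, h1, h2, hlt, hag⟩ | ⟨hlen, hag⟩)
    · refine Or.inl ⟨j, h1, h2, ?_, ?_⟩
      · rw [← hF j h1 h1, ← hG j h2 h2]; exact hlt
      · intro i hi1 hi2 hij
        rw [← hF i hi1 hi1, ← hG i hi2 hi2]; exact hag i hi1 hi2 hij
    · refine Or.inr ⟨hlen, ?_⟩
      intro i hi1 hi2
      rw [← hF i hi1 hi1, ← hG i hi2 hi2]; exact hag i hi1 hi2
  · rintro (⟨j, h1, h2, hlt, hag⟩ | ⟨hlen, hag⟩)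
    · refine Or.inl ⟨j, h1, h2, ?_, ?_⟩
      · rw [hF j h1 h1, hG j h2 h2]; exact hlt
      · intro i hi1 hi2 hij
        rw [hF i hi1 hi1, hG i hi2 hi2]; exact hag i hi1 hi2 hij
    · refine Or.inr ⟨hlen, ?_⟩
      intro i hi1 hi2
      rw [hF i hi1 hi1, hG i hi2 hi2]; exact hag i hi1 hi2

/-- The underlying list of the embedding: position `π n j` carries the `j`-th entry. -/
noncomputable def embList {γ α : Type*} [LinearOrder γ] (Lle : ℕ → ℕ → Prop)
    (π : ∀ n, Equiv.Perm (Fin n)) (σ : EList γ α) : List (DecList γ × α) :=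
  List.ofFn (fun p : Fin σ.1.length =>
    entPair Lle σ.1 σ.2 (((π σ.1.length).symm p) : ℕ) ((π σ.1.length).symm p).isLt)

theorem fin_cast_pi (π : ∀ n, Equiv.Perm (Fin n)) {L n : ℕ} (c : L = n) (j : ℕ)
    (hj : j < L) (hj' : j < n) : Fin.cast c (π L ⟨j, hj⟩) = π n ⟨j, hj'⟩ := by
  subst c
  rfl

theorem embList_length {γ α : Type*} [LinearOrder γ] (Lle : ℕ → ℕ → Prop)
    (π : ∀ n, Equiv.Perm (Fin n)) (σ : EList γ α) :
    (embList Lle π σ).length = σ.1.length := List.length_ofFn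

theorem entPair_congr {γ α : Type*} [LinearOrder γ] {Lle : ℕ → ℕ → Prop}
    {l : List (γ × α)} {hl : (l.map Prod.fst).Chain' (· > ·)} {j j' : ℕ}
    {hj : j < l.length} {hj' : j' < l.length} (h : j = j') :
    entPair Lle l hl j hj = entPair Lle l hl j' hj' := by
  subst h
  rfl

theorem embList_get {γ α : Type*} [LinearOrder γ] (Lle : ℕ → ℕ → Prop)
    (π : ∀ n, Equiv.Perm (Fin n)) (σ : EList γ α) (j : ℕ) (h : j < σ.1.length)
    (h' : j < (embList Lle π σ).length) :
    (embList Lle π σ).get (π (embList Lle π σ).length ⟨j, h'⟩)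
      = entPair Lle σ.1 σ.2 j h := by
  unfold embList
  rw [List.get_ofFn]
  refine entPair_congr ?_
  have key : ∀ (L' : ℕ) (c : L' = σ.1.length) (h' : j < L'),
      (((π σ.1.length).symm (Fin.cast c (π L' ⟨j, h'⟩)) : Fin _) : ℕ) = j := by
    intro L' c h'; subst c; simp
  exact key _ _ _

theorem embList_get' {γ α : Type*} [LinearOrder γ] (Lle : ℕ → ℕ → Prop)
    (π : ∀ n, Equiv.Perm (Fin n)) (σ : EList γ α) (k : ℕ)
    (hk : k < (embList Lle π σ).length) (hk' : k < σ.1.length) :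
    (embList Lle π σ).get ⟨k, hk⟩
      = entPair Lle σ.1 σ.2 (((π σ.1.length).symm ⟨k, hk'⟩ : Fin σ.1.length) : ℕ)
          ((π σ.1.length).symm ⟨k, hk'⟩).isLt := by
  unfold embList at hk ⊢
  rw [List.get_ofFn]
  congr 1

theorem embList_chain {γ α : Type*} [LinearOrder γ] [LinearOrder α] {Lle : ℕ → ℕ → Prop}
    (hL : IsLinearOrder ℕ Lle) {π : ∀ n, Equiv.Perm (Fin n)} (hπ : PermOf Lle π)
    (σ : EList γ α) : (embList Lle π σ).Chain' (ProdLt (γ := γ) (α := α)) := by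
  rw [List.chain'_iff_get]
  intro i hi
  have hlen := embList_length Lle π σ
  have h1 : i < σ.1.length := by omega
  have h2 : i + 1 < σ.1.length := by omega
  rw [embList_get' Lle π σ i (by omega) h1, embList_get' Lle π σ (i+1) (by omega) h2]
  have hne : (((π σ.1.length).symm ⟨i, h1⟩ : Fin σ.1.length) : ℕ)
      ≠ (((π σ.1.length).symm ⟨i+1, h2⟩ : Fin σ.1.length) : ℕ) := by
    intro hval
    have h3 := (Equiv.injective _) (Fin.ext hval :
      (π σ.1.length).symm ⟨i, h1⟩ = (π σ.1.length).symm ⟨i+1, h2⟩)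
    have := congrArg Fin.val h3
    simp at this
  have hLuv : Lle (((π σ.1.length).symm ⟨i, h1⟩ : Fin σ.1.length) : ℕ)
      (((π σ.1.length).symm ⟨i+1, h2⟩ : Fin σ.1.length) : ℕ) := by
    refine (hπ σ.1.length _ _).1 ?_
    rw [Equiv.apply_symm_apply, Equiv.apply_symm_apply]
    simp
  exact Or.inl (apred_lex hL σ.2 hne hLuv
    (by simpa using ((π σ.1.length).symm ⟨i+1, h2⟩).isLt))

/-- For arbitrary linear orders `L` and `γ`, the order `(1+α)^γ` embeds into
`D_L(α · 2^γ)` for every linear order `α`. -/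
theorem stmt10 {γ α : Type*} [LinearOrder γ] [LinearOrder α]
    (Lle : ℕ → ℕ → Prop) (hL : IsLinearOrder ℕ Lle)
    (π : ∀ n, Equiv.Perm (Fin n)) (hπ : PermOf Lle π) :
    ∃ e : EList γ α → IncList (ProdLt (γ := γ) (α := α)),
      ∀ σ τ : EList γ α, ELt σ τ ↔ DLt (ProdLt (γ := γ) (α := α)) π (e σ) (e τ) := by
  classical
  refine ⟨fun σ => ⟨embList Lle π σ, embList_chain hL hπ σ⟩, fun σ τ => ?_⟩
  unfold ELt
  rw [lex_char_s10]
  rw [dlt_char (ProdLt (γ := γ) (α := α)) π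
      ⟨embList Lle π σ, embList_chain hL hπ σ⟩ ⟨embList Lle π τ, embList_chain hL hπ τ⟩
      σ.1.length τ.1.length (embList_length Lle π σ) (embList_length Lle π τ)
      (fun j h => entPair Lle σ.1 σ.2 j h) (fun j h => entPair Lle τ.1 τ.2 j h)
      (embList_get Lle π σ) (embList_get Lle π τ)]
  constructor
  · rintro (⟨j, h1, h2, hr, hag⟩ | ⟨hlen, hag⟩)
    · refine Or.inl ⟨j, h1, h2, ?_, ?_⟩
      · exact ((ent_cmp hL σ.2 τ.2 h1 h2 hag).1).2 hr
      · exact (ent_agree hL σ.2 τ.2 j (le_of_lt h1) (le_of_lt h2)).1 hag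
    · refine Or.inr ⟨hlen, fun i hi1 hi2 => ?_⟩
      exact (ent_agree hL σ.2 τ.2 σ.1.length le_rfl (le_of_lt hlen)).1
        (fun k hk1 hk2 _ => hag k hk1 hk2) i hi1 hi2 hi1
  · rintro (⟨j, h1, h2, hr, hag⟩ | ⟨hlen, hag⟩)
    · have hpag : ∀ i (hi1 : i < σ.1.length) (hi2 : i < τ.1.length), i < j →
          σ.1.get ⟨i, hi1⟩ = τ.1.get ⟨i, hi2⟩ :=
        (ent_agree hL σ.2 τ.2 j (le_of_lt h1) (le_of_lt h2)).2 hag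
      exact Or.inl ⟨j, h1, h2, ((ent_cmp hL σ.2 τ.2 h1 h2 hpag).1).1 hr, hpag⟩
    · refine Or.inr ⟨hlen, fun i hi1 hi2 => ?_⟩
      exact (ent_agree hL σ.2 τ.2 σ.1.length le_rfl (le_of_lt hlen)).2
        (fun k hk1 hk2 _ => hag k hk1 hk2) i hi1 hi2 hi1
end

section
/- Suppose L = (ℕ, ≤_L) embeds into ℤ^r (the lexicographic power of the integers with r coordinates, finitely many coordinates, compared from the highest coordinate). Then for every linear order α there is an order embedding of 2^α into D_L(α · (ω·(α+1))^r). -/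
/-- The lexicographic order on `ℤ^r` (coordinate `0` has the highest priority). -/
def ZLt (r : ℕ) (f g : Fin r → ℤ) : Prop :=
  ∃ k : Fin r, f k < g k ∧ ∀ l : Fin r, l < k → f l = g l

/-- The order `ω·(α+1)`: pairs `(x, n)` with `x ∈ α+1 = WithTop α`, `x` taking priority. -/
def WLt {α : Type*} [LinearOrder α] (p q : WithTop α × ℕ) : Prop :=
  p.1 < q.1 ∨ (p.1 = q.1 ∧ p.2 < q.2)

/-- The `r`-fold lexicographic power `(ω·(α+1))^r`. -/
def RLt {α : Type*} [LinearOrder α] (r : ℕ) (f g : Fin r → WithTop α × ℕ) : Prop :=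
  ∃ k : Fin r, WLt (f k) (g k) ∧ ∀ l : Fin r, l < k → f l = g l

/-- The order `α · (ω·(α+1))^r` (second component, i.e. `(ω·(α+1))^r`, takes priority). -/
def PLt11 {α : Type*} [LinearOrder α] (r : ℕ)
    (p q : (Fin r → WithTop α × ℕ) × α) : Prop :=
  RLt r p.1 q.1 ∨ (p.1 = q.1 ∧ p.2 < q.2)

namespace Stmt11
variable {α : Type*} [LinearOrder α]

/-! ### Basic facts about the orders -/

lemma wlt_irrefl (p : WithTop α × ℕ) : ¬ WLt p p := by
  rintro (h | ⟨_, h⟩) <;> exact lt_irrefl _ h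

lemma wlt_asymm {p q : WithTop α × ℕ} (h1 : WLt p q) (h2 : WLt q p) : False := by
  rcases h1 with h1 | ⟨e1, h1⟩ <;> rcases h2 with h2 | ⟨e2, h2⟩
  · exact absurd (h1.trans h2) (lt_irrefl _)
  · rw [e2] at h1; exact lt_irrefl _ h1
  · rw [e1] at h2; exact lt_irrefl _ h2
  · exact absurd (h1.trans h2) (lt_irrefl _)

lemma rlt_irrefl {r : ℕ} (f : Fin r → WithTop α × ℕ) : ¬ RLt r f f := by
  rintro ⟨k, hk, _⟩; exact wlt_irrefl _ hk

lemma rlt_asymm {r : ℕ} {f g : Fin r → WithTop α × ℕ}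
    (h1 : RLt r f g) (h2 : RLt r g f) : False := by
  obtain ⟨k1, hk1, he1⟩ := h1
  obtain ⟨k2, hk2, he2⟩ := h2
  rcases lt_trichotomy k1 k2 with hk | hk | hk
  · rw [he2 k1 hk] at hk1; exact wlt_irrefl _ hk1
  · subst hk; exact wlt_asymm hk1 hk2
  · rw [he1 k2 hk] at hk2; exact wlt_irrefl _ hk2

lemma plt_irrefl {r : ℕ} (p : (Fin r → WithTop α × ℕ) × α) : ¬ PLt11 r p p := by
  rintro (hp | ⟨_, hp⟩)
  · exact rlt_irrefl _ hp
  · exact lt_irrefl _ hp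

lemma plt_asymm {r : ℕ} {p q : (Fin r → WithTop α × ℕ) × α}
    (h1 : PLt11 r p q) (h2 : PLt11 r q p) : False := by
  rcases h1 with h1 | ⟨e1, h1⟩ <;> rcases h2 with h2 | ⟨e2, h2⟩
  · exact rlt_asymm h1 h2
  · rw [e2] at h1; exact rlt_irrefl _ h1
  · rw [e1] at h2; exact rlt_irrefl _ h2
  · exact absurd (h1.trans h2) (lt_irrefl _)

/-! ### Irreflexivity and asymmetry of `DLt` -/

lemma dlt_irrefl {β : Type*} {lt : β → β → Prop} (hirr : ∀ x, ¬ lt x x)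
    (π : ∀ n, Equiv.Perm (Fin n)) (σ : IncList lt) : ¬ DLt lt π σ σ := by
  rintro (⟨j, hs, ht, hlt, _⟩ | ⟨hlen, _⟩)
  · exact hirr _ hlt
  · exact lt_irrefl _ hlen

lemma dlt_asymm {β : Type*} {lt : β → β → Prop} (hirr : ∀ x, ¬ lt x x)
    (hasym : ∀ x y, lt x y → lt y x → False)
    (π : ∀ n, Equiv.Perm (Fin n)) (σ τ : IncList lt)
    (h1 : DLt lt π σ τ) (h2 : DLt lt π τ σ) : False := by
  rcases h1 with ⟨j1, hs1, ht1, hlt1, heq1⟩ | ⟨hlen1, heq1⟩ <;>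
    rcases h2 with ⟨j2, hs2, ht2, hlt2, heq2⟩ | ⟨hlen2, heq2⟩
  · rcases lt_trichotomy j1 j2 with hj | hj | hj
    · rw [heq2 j1 ht1 hs1 hj] at hlt1; exact hirr _ hlt1
    · subst hj; exact hasym _ _ hlt1 hlt2
    · rw [heq1 j2 ht2 hs2 hj] at hlt2; exact hirr _ hlt2
  · rw [heq2 j1 ht1 hs1] at hlt1; exact hirr _ hlt1
  · rw [heq1 j2 ht2 hs2] at hlt2; exact hirr _ hlt2
  · exact absurd (hlen1.trans hlen2) (lt_irrefl _)

/-! ### Lex facts -/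

lemma lex_total {γ : Type*} [LinearOrder γ] :
    ∀ s t : List γ, s ≠ t → List.Lex (· < ·) s t ∨ List.Lex (· < ·) t s := by
  intro s
  induction s with
  | nil =>
    intro t ht
    cases t with
    | nil => exact absurd rfl ht
    | cons b t => exact Or.inl List.Lex.nil
  | cons a s ih =>
    intro t ht
    cases t with
    | nil => exact Or.inr List.Lex.nil
    | cons b t =>
      rcases lt_trichotomy a b with hab | rfl | hab
      · exact Or.inl (List.Lex.rel hab)
      · rcases ih t (fun hc => ht (by rw [hc])) with hc | hc
        · exact Or.inl (List.Lex.cons hc)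
        · exact Or.inr (List.Lex.cons hc)
      · exact Or.inr (List.Lex.rel hab)

lemma lex_char {γ : Type*} [LinearOrder γ] :
    ∀ {s t : List γ}, List.Lex (· < ·) s t →
    (∃ j, ∃ h1 : j < s.length, ∃ h2 : j < t.length,
        s[j] < t[j] ∧
        ∀ i (h1' : i < s.length) (h2' : i < t.length), i < j → s[i] = t[i])
    ∨ (s.length < t.length ∧
        ∀ i (h1' : i < s.length) (h2' : i < t.length), s[i] = t[i]) := by
  intro s t h
  induction h with
  | nil =>
    right
    refine ⟨by simp, ?_⟩
    intro i h1 _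
    simp at h1
  | @rel a l b l' hab =>
    left
    exact ⟨0, by simp, by simp, hab, fun i _ _ hi => absurd hi (Nat.not_lt_zero i)⟩
  | @cons a l l' h ih =>
    rcases ih with ⟨j, h1, h2, hlt, heq⟩ | ⟨hlen, heq⟩
    · left
      refine ⟨j + 1, by simpa using h1, by simpa using h2, by simpa using hlt, ?_⟩
      intro i hi1 hi2 hij
      cases i with
      | zero => simp
      | succ i =>
        simp only [List.getElem_cons_succ]
        exact heq i (by simpa using hi1) (by simpa using hi2) (by omega)
    · right
      refine ⟨by simpa using hlen, ?_⟩
      intro i hi1 hi2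
      cases i with
      | zero => simp
      | succ i =>
        simp only [List.getElem_cons_succ]
        exact heq i (by simpa using hi1) (by simpa using hi2)

/-! ### The online placement of an integer sequence into `ω·(α+1)` -/

/-- Index of the record minimum whose value is the base for `z j`. -/
noncomputable def recBase (z : ℕ → ℤ) (j : ℕ) : ℕ :=
  sInf {i | (∀ i' < i, z i < z i') ∧ z i ≤ z j}

lemma exists_rec (z : ℕ → ℤ) : ∀ j, ∃ i, i ≤ j ∧ (∀ i' < i, z i < z i') ∧ z i ≤ z j := by
  intro j
  induction j using Nat.strong_induction_on with
  | _ j ih =>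
    by_cases hj : ∀ i' < j, z j < z i'
    · exact ⟨j, le_refl j, hj, le_refl _⟩
    · push_neg at hj
      obtain ⟨i, hij, hzi⟩ := hj
      obtain ⟨i2, hi2, hrec, hle⟩ := ih i hij
      exact ⟨i2, le_of_lt (lt_of_le_of_lt hi2 hij), hrec, hle.trans hzi⟩

lemma recBase_spec (z : ℕ → ℤ) (j : ℕ) :
    (∀ i' < recBase z j, z (recBase z j) < z i') ∧ z (recBase z j) ≤ z j := by
  obtain ⟨i, _, h⟩ := exists_rec z j
  have hm : recBase z j ∈ {i | (∀ i' < i, z i < z i') ∧ z i ≤ z j} := Nat.sInf_mem ⟨i, h⟩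
  exact hm

lemma recBase_le (z : ℕ → ℤ) (j : ℕ) : recBase z j ≤ j := by
  obtain ⟨i, hij, h⟩ := exists_rec z j
  exact (Nat.sInf_le h).trans hij

lemma recBase_mono {z : ℕ → ℤ} {i j : ℕ} (h : z i ≤ z j) : recBase z j ≤ recBase z i := by
  have hs := recBase_spec z i
  exact Nat.sInf_le ⟨hs.1, hs.2.trans h⟩

lemma recBase_congr {z : ℕ → ℤ} {i j : ℕ} (h : z i = z j) : recBase z i = recBase z j :=
  le_antisymm (recBase_mono h.ge) (recBase_mono h.le)

/-- Labels: `0 ↦ ⊤`, `i+1 ↦` the `i`-th entry of the decreasing list. -/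
def lab (l : List α) : ℕ → WithTop α
  | 0 => ⊤
  | (i + 1) =>
    match l[i]? with
    | some a => (a : WithTop α)
    | none => ⊤

lemma lab_congr {l₁ l₂ : List α} {m : ℕ} (h : l₁.take m = l₂.take m) {i : ℕ} (hi : i ≤ m) :
    lab l₁ i = lab l₂ i := by
  cases i with
  | zero => rfl
  | succ i =>
    have hi' : i < m := hi
    have hg : l₁[i]? = l₂[i]? := by
      have e1 : (l₁.take m)[i]? = l₁[i]? := by
        rw [List.getElem?_take]; simp [hi']
      have e2 : (l₂.take m)[i]? = l₂[i]? := by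
        rw [List.getElem?_take]; simp [hi']
      rw [← e1, ← e2, h]
    simp only [lab, hg]

lemma lab_lt {l : List α} (hl : l.Chain' (· > ·)) {i i' : ℕ} (hii : i < i')
    (hlen : i' - 1 < l.length) : lab l i' < lab l i := by
  have hpw : l.Pairwise (· > ·) := List.isChain_iff_pairwise.mp hl
  obtain ⟨k, rfl⟩ : ∃ k, i' = k + 1 := ⟨i' - 1, by omega⟩
  have hk : k < l.length := by omega
  cases i with
  | zero =>
    simp only [lab, List.getElem?_eq_getElem hk]
    exact WithTop.coe_lt_top _
  | succ m =>
    have hm : m < l.length := by omega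
    have hrel : l[k] < l[m] := by
      have := List.pairwise_iff_get.mp hpw ⟨m, hm⟩ ⟨k, hk⟩ (by simpa using (by omega : m < k))
      simpa using this
    simp only [lab, List.getElem?_eq_getElem hk, List.getElem?_eq_getElem hm]
    exact WithTop.coe_lt_coe.mpr hrel

/-- The value in `ω·(α+1)` assigned to `z j`. -/
noncomputable def wval (z : ℕ → ℤ) (l : List α) (j : ℕ) : WithTop α × ℕ :=
  (lab l (recBase z j), (z j - z (recBase z j)).toNat)

lemma wval_congr_eq {z : ℕ → ℤ} {l : List α} {i j : ℕ} (h : z i = z j) :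
    wval z l i = wval z l j := by
  unfold wval
  rw [recBase_congr h, h]

lemma wval_congr_take {z : ℕ → ℤ} {l₁ l₂ : List α} {m j : ℕ}
    (h : l₁.take m = l₂.take m) (hj : j ≤ m) : wval z l₁ j = wval z l₂ j := by
  have h' : l₁.take j = l₂.take j := by
    have := congrArg (List.take j) h
    rwa [List.take_take, List.take_take, min_eq_left hj] at this
  unfold wval
  rw [lab_congr h' (recBase_le z j)]

lemma wval_lt {z : ℕ → ℤ} {l : List α} (hl : l.Chain' (· > ·)) {i j : ℕ}
    (hz : z i < z j) (hi : i < l.length) : WLt (wval z l i) (wval z l j) := by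
  have hmono : recBase z j ≤ recBase z i := recBase_mono hz.le
  rcases eq_or_lt_of_le hmono with heq | hlt
  · right
    constructor
    · show lab l (recBase z i) = lab l (recBase z j)
      rw [heq]
    · show (z i - z (recBase z i)).toNat < (z j - z (recBase z j)).toNat
      have hb : z (recBase z i) ≤ z i := (recBase_spec z i).2
      rw [heq]
      omega
  · left
    show lab l (recBase z i) < lab l (recBase z j)
    have hle : recBase z i ≤ i := recBase_le z i
    exact lab_lt hl hlt (by omega)

/-! ### The full construction -/

variable {r : ℕ}

noncomputable def gfun (h : ℕ → Fin r → ℤ) (l : List α) (j : ℕ) :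
    Fin r → WithTop α × ℕ :=
  fun k => wval (fun m => h m k) l j

lemma gfun_congr_take {h : ℕ → Fin r → ℤ} {l₁ l₂ : List α} {m j : ℕ}
    (hT : l₁.take m = l₂.take m) (hj : j ≤ m) : gfun h l₁ j = gfun h l₂ j :=
  funext fun k => wval_congr_take hT hj

lemma gfun_lt {h : ℕ → Fin r → ℤ} {l : List α} (hl : l.Chain' (· > ·)) {i j : ℕ}
    (hz : ZLt r (h i) (h j)) (hi : i < l.length) : RLt r (gfun h l i) (gfun h l j) := by
  obtain ⟨k, hk, hke⟩ := hz
  exact ⟨k, wval_lt hl hk hi, fun k' hk' => wval_congr_eq (hke k' hk')⟩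

noncomputable def yfun (h : ℕ → Fin r → ℤ) (l : List α) (j : ℕ) (hj : j < l.length) :
    (Fin r → WithTop α × ℕ) × α :=
  (gfun h l j, l[j])

noncomputable def elist (π : ∀ n, Equiv.Perm (Fin n)) (h : ℕ → Fin r → ℤ) (l : List α) :
    List ((Fin r → WithTop α × ℕ) × α) :=
  List.ofFn (fun i : Fin l.length => yfun h l ((π l.length)⁻¹ i) ((π l.length)⁻¹ i).2)

lemma elist_length (π : ∀ n, Equiv.Perm (Fin n)) (h : ℕ → Fin r → ℤ) (l : List α) :
    (elist π h l).length = l.length :=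
  List.length_ofFn

lemma pi_val_congr (π : ∀ n, Equiv.Perm (Fin n)) {m m' : ℕ} (hmm : m = m') (j : ℕ)
    (hj : j < m) (hj' : j < m') : ((π m ⟨j, hj⟩ : Fin m) : ℕ) = ((π m' ⟨j, hj'⟩ : Fin m') : ℕ) := by
  subst hmm; rfl

lemma yfun_congr (h : ℕ → Fin r → ℤ) (l : List α) {i j : ℕ} (hij : i = j)
    (hi : i < l.length) (hj : j < l.length) : yfun h l i hi = yfun h l j hj := by
  subst hij; rfl

lemma read_aux {β : Type*} (π : ∀ n, Equiv.Perm (Fin n)) {n : ℕ} (f : Fin n → β)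
    (x : List β) (hx : x.length = n)
    (hget : ∀ i : Fin x.length, x.get i = f (Fin.cast hx i))
    (j : ℕ) (hj : j < x.length) (hj' : j < n) :
    x.get (π x.length ⟨j, hj⟩) = f (π n ⟨j, hj'⟩) := by
  subst hx
  rw [hget]
  congr 1

lemma elist_read (π : ∀ n, Equiv.Perm (Fin n)) (h : ℕ → Fin r → ℤ) (l : List α)
    (j : ℕ) (hj : j < (elist π h l).length) (hj' : j < l.length) :
    (elist π h l).get (π (elist π h l).length ⟨j, hj⟩) = yfun h l j hj' := by
  have hstep : (elist π h l).get (π (elist π h l).length ⟨j, hj⟩) =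
      (fun i : Fin l.length => yfun h l ((π l.length)⁻¹ i) ((π l.length)⁻¹ i).2)
        (π l.length ⟨j, hj'⟩) := by
    refine read_aux π
      (f := fun i : Fin l.length => yfun h l ((π l.length)⁻¹ i) ((π l.length)⁻¹ i).2)
      _ (elist_length π h l) ?_ j hj hj'
    intro i
    show (elist π h l).get i = _
    rw [List.get_eq_getElem]
    unfold elist
    rw [List.getElem_ofFn]
    congr 1
  rw [hstep]
  show yfun h l ((π l.length)⁻¹ (π l.length ⟨j, hj'⟩)) _ = yfun h l j hj'
  apply yfun_congr
  rw [Equiv.Perm.inv_def, Equiv.symm_apply_apply]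


lemma elist_chain' {r : ℕ} {Lle : ℕ → ℕ → Prop}
    (π : ∀ n, Equiv.Perm (Fin n)) (hπ : PermOf Lle π)
    (h : ℕ → Fin r → ℤ)
    (hh : ∀ i j : ℕ, (Lle i j ∧ ¬ Lle j i) ↔ ZLt r (h i) (h j))
    {l : List α} (hl : l.Chain' (· > ·)) :
    (elist π h l).Chain' (PLt11 r) := by
  apply List.Pairwise.isChain
  unfold elist
  rw [List.pairwise_ofFn]
  intro i j hij
  have h1 : Lle (((π l.length)⁻¹ i : Fin _) : ℕ) (((π l.length)⁻¹ j : Fin _) : ℕ) := by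
    apply (hπ l.length ((π l.length)⁻¹ i) ((π l.length)⁻¹ j)).mp
    simp only [Equiv.Perm.inv_def, Equiv.apply_symm_apply]
    exact hij.le
  have h2 : ¬ Lle (((π l.length)⁻¹ j : Fin _) : ℕ) (((π l.length)⁻¹ i : Fin _) : ℕ) := by
    intro hc
    have hle := (hπ l.length ((π l.length)⁻¹ j) ((π l.length)⁻¹ i)).mpr hc
    simp only [Equiv.Perm.inv_def, Equiv.apply_symm_apply] at hle
    exact absurd hle (not_le.mpr hij)
  have hz := (hh _ _).mp ⟨h1, h2⟩
  exact Or.inl (gfun_lt hl hz ((π l.length)⁻¹ i).2)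

lemma dlt_of_lex {r : ℕ} (π : ∀ n, Equiv.Perm (Fin n)) (h : ℕ → Fin r → ℤ)
    {s t : List α} (hlex : List.Lex (· < ·) s t)
    (σ' τ' : IncList (PLt11 (α := α) r))
    (hσ : σ'.1 = elist π h s) (hτ : τ'.1 = elist π h t) :
    DLt (PLt11 (α := α) r) π σ' τ' := by
  obtain ⟨σl, σp⟩ := σ'
  obtain ⟨τl, τp⟩ := τ'
  have hσ' : σl = elist π h s := hσ
  have hτ' : τl = elist π h t := hτ
  subst hσ'
  subst hτ'
  have hlenσ := elist_length π h s
  have hlenτ := elist_length π h t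
  unfold DLt
  dsimp only
  rcases lex_char hlex with ⟨j, h1, h2, hlt, heq⟩ | ⟨hlen, heq⟩
  · have hjs : j < (elist π h s).length := by rw [elist_length]; exact h1
    have hjt : j < (elist π h t).length := by rw [elist_length]; exact h2
    have htake : s.take j = t.take j := by
      apply List.ext_getElem
      · rw [List.length_take, List.length_take]; omega
      · intro i hi1 hi2
        rw [List.getElem_take, List.getElem_take]
        have hi : i < j := by rw [List.length_take] at hi1; omega
        exact heq i (by omega) (by omega) hi
    refine Or.inl ⟨j, hjs, hjt, ?_, ?_⟩
    · rw [elist_read π h s j hjs h1, elist_read π h t j hjt h2]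
      refine Or.inr ⟨?_, ?_⟩
      · exact gfun_congr_take htake (le_refl j)
      · exact hlt
    · intro i his hit hij
      rw [elist_read π h s i his (by omega), elist_read π h t i hit (by omega)]
      refine Prod.ext ?_ ?_
      · exact gfun_congr_take htake (le_of_lt hij)
      · exact heq i (by omega) (by omega) hij
  · refine Or.inr ⟨by omega, ?_⟩
    intro i his hit
    have his' : i < s.length := by omega
    have hit' : i < t.length := by omega
    have htake : s.take s.length = t.take s.length := by
      apply List.ext_getElem
      · rw [List.length_take, List.length_take]; omega
      · intro i hi1 hi2
        rw [List.getElem_take, List.getElem_take]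
        have hi : i < s.length := by rw [List.length_take] at hi1; omega
        exact heq i hi (by omega)
    rw [elist_read π h s i his his', elist_read π h t i hit hit']
    refine Prod.ext ?_ ?_
    · exact gfun_congr_take htake (by omega)
    · exact heq i his' hit'

end Stmt11

/-- If `L` embeds into `ℤ^r` (i.e. `L` is scattered of finite Hausdorff rank `r`),
then for every linear order `α` there is an order embedding of `2^α` into
`D_L(α · (ω·(α+1))^r)`. -/
theorem stmt11 {α : Type*} [LinearOrder α] (r : ℕ)
    (Lle : ℕ → ℕ → Prop) (hL : IsLinearOrder ℕ Lle)
    (π : ∀ n, Equiv.Perm (Fin n)) (hπ : PermOf Lle π)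
    (h : ∃ h : ℕ → Fin r → ℤ, ∀ i j : ℕ,
        (Lle i j ∧ ¬ Lle j i) ↔ ZLt r (h i) (h j)) :
    ∃ e : DecList α → IncList (PLt11 (α := α) r),
      ∀ σ τ : DecList α, TwoLt σ τ ↔ DLt (PLt11 (α := α) r) π (e σ) (e τ) := by
  obtain ⟨h, hh⟩ := h
  refine ⟨fun σ => ⟨Stmt11.elist π h σ.1, Stmt11.elist_chain' π hπ h hh σ.2⟩, ?_⟩
  intro σ τ
  constructor
  · intro hlex
    exact Stmt11.dlt_of_lex π h hlex _ _ rfl rfl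
  · intro hd
    by_cases hst : σ = τ
    · subst hst
      exact absurd hd (Stmt11.dlt_irrefl Stmt11.plt_irrefl π _)
    · rcases Stmt11.lex_total σ.1 τ.1 (fun hc => hst (Subtype.ext hc)) with hl | hl
      · exact hl
      · have hd2 := Stmt11.dlt_of_lex π h hl
          (⟨Stmt11.elist π h τ.1, Stmt11.elist_chain' π hπ h hh τ.2⟩ : IncList (PLt11 (α := α) r))
          (⟨Stmt11.elist π h σ.1, Stmt11.elist_chain' π hπ h hh σ.2⟩ : IncList (PLt11 (α := α) r))
          rfl rfl
        exact absurd hd2 (fun hx => (Stmt11.dlt_asymm Stmt11.plt_irrefl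
          (fun _ _ => Stmt11.plt_asymm) π _ _ hd hx).elim)
end

section
/- Let σ_0 > σ_1 > σ_2 > ... be an infinite strictly descending sequence in 2^α for a linear order α, writing σ_n as the strictly decreasing sequence of its exponents σ_n(0) > σ_n(1) > ... Then there exists an infinite strictly descending sequence in α. Hence if α is well-founded, so is 2^α (classically). -/
open Ordinal

/-- Value of a decreasing list as an ordinal: `ω^typein a₀ + ω^typein a₁ + ⋯`. -/
private noncomputable def dlVal {α : Type*} [LinearOrder α] [IsWellOrder α (· < ·)] :
    List α → Ordinal
  | [] => 0
  | a :: l => ω ^ Ordinal.typein ((· < ·) : α → α → Prop) a + dlVal l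

private lemma dlVal_lt {α : Type*} [LinearOrder α] [IsWellOrder α (· < ·)] :
    ∀ {l : List α}, l.Chain' (· > ·) → ∀ {e : Ordinal},
      (∀ x ∈ l, Ordinal.typein ((· < ·) : α → α → Prop) x < e) → dlVal l < ω ^ e
  | [], _, e, _ => by
      simp [dlVal]
      exact opow_pos e omega0_pos
  | a :: l, hc, e, hlt => by
      have hpw := (List.isChain_iff_pairwise.1 hc)
      have hta : ∀ x ∈ l, Ordinal.typein ((· < ·) : α → α → Prop) x <
          Ordinal.typein ((· < ·) : α → α → Prop) a := by
        intro x hx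
        exact (Ordinal.typein_lt_typein _).2 (List.rel_of_pairwise_cons hpw hx)
      have ih : dlVal l < ω ^ Ordinal.typein ((· < ·) : α → α → Prop) a :=
        dlVal_lt hc.tail hta
      have hae : Ordinal.typein ((· < ·) : α → α → Prop) a < e := hlt a (by simp)
      have hωe : ω ^ Ordinal.typein ((· < ·) : α → α → Prop) a < ω ^ e :=
        (opow_lt_opow_iff_right one_lt_omega0).2 hae
      show ω ^ Ordinal.typein ((· < ·) : α → α → Prop) a + dlVal l < ω ^ e
      exact principal_add_omega0_opow e hωe (ih.trans hωe)

private lemma dlVal_strictMono {α : Type*} [LinearOrder α] [IsWellOrder α (· < ·)]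
    {l₁ l₂ : List α} (h : List.Lex (· < ·) l₁ l₂)
    (c₁ : l₁.Chain' (· > ·)) (c₂ : l₂.Chain' (· > ·)) : dlVal l₁ < dlVal l₂ := by
  induction h with
  | nil =>
      simp only [dlVal]
      exact lt_of_lt_of_le (opow_pos _ omega0_pos) le_self_add
  | @cons a l₁' l₂' h ih =>
      simp only [dlVal]
      exact (add_lt_add_iff_left _).2 (ih c₁.tail c₂.tail)
  | @rel a l₁' b l₂' hab =>
      have h1 : dlVal (a :: l₁') < ω ^ Ordinal.typein ((· < ·) : α → α → Prop) b := by
        refine dlVal_lt c₁ ?_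
        intro x hx
        rcases List.mem_cons.1 hx with rfl | hx
        · exact (Ordinal.typein_lt_typein _).2 hab
        · exact (Ordinal.typein_lt_typein _).2
            (lt_trans (List.rel_of_pairwise_cons (List.isChain_iff_pairwise.1 c₁) hx) hab)
      calc dlVal (a :: l₁') < ω ^ Ordinal.typein ((· < ·) : α → α → Prop) b := h1
        _ ≤ dlVal (b :: l₂') := le_self_add

/-- From an infinite strictly descending sequence in `2^α` one obtains an
infinite strictly descending sequence in `α`. -/
theorem stmt14 {α : Type*} [LinearOrder α] (F : ℕ → DecList α)
    (hF : ∀ n, TwoLt (F (n + 1)) (F n)) :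
    ∃ g : ℕ → α, ∀ n, g (n + 1) < g n := by
  by_contra h
  have wf : WellFounded ((· < ·) : α → α → Prop) := by
    rw [RelEmbedding.wellFounded_iff_isEmpty]
    constructor
    intro f
    exact h ⟨fun n => f n, fun n => f.map_rel_iff.2 (Nat.lt_succ_self n)⟩
  letI : WellFoundedLT α := ⟨wf⟩
  have hdec : ∀ n, dlVal (F (n + 1)).1 < dlVal (F n).1 := fun n =>
    dlVal_strictMono (hF n) (F (n + 1)).2 (F n).2
  exact RelEmbedding.not_wellFounded
    (RelEmbedding.natGT (fun n => dlVal (F n).1) hdec) Ordinal.lt_wf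
end

section
/- In the proof of the embedding of (1+α)^γ into D_L(α·2^γ): given a strictly descending sequence γ_0 > γ_1 > ... > γ_{k-1} in γ and terms σ_j ∈ 2^γ defined recursively with σ_0 = 2^{γ_0} and σ_{i+1} chosen from {2^{γ_{i+1}}} ∪ {σ_j + 2^{γ_{i+1}} : j ≤ i}, there is exactly one such choice of σ_{i+1} making the partial assignment e(π_k(i)) = α·σ_i + α_i order-preserving on {0,...,i+1} at each stage. -/
/-- The strict order on `α · 2^γ`, where an element is a pair of a (decreasing)
list of exponents in `γ` and an element of `α`, the list taking priority. -/
def PLt16 {γ α : Type*} [LinearOrder γ] [LinearOrder α] (p q : List γ × α) : Prop :=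
  List.Lex (· < ·) p.1 q.1 ∨ (p.1 = q.1 ∧ p.2 < q.2)

/-- If `l <lex m` and `b` is below every entry of `m`, then `l ++ [b] <lex m`. -/
private lemma auxA {β : Type*} [LinearOrder β] {b : β} :
    ∀ {l m : List β}, List.Lex (· < ·) l m → (∀ x ∈ m, b < x) →
      List.Lex (· < ·) (l ++ [b]) m := by
  intro l m h
  induction h with
  | nil => intro hm; exact List.Lex.rel (hm _ (List.mem_cons_self))
  | cons h ih =>
      intro hm
      exact List.Lex.cons (ih fun x hx => hm x (List.mem_cons_of_mem _ hx))
  | rel h => intro _; exact List.Lex.rel h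

/-- A list is lex-below itself extended by one entry. -/
private lemma auxB {β : Type*} [LinearOrder β] (l : List β) (b : β) :
    List.Lex (· < ·) l (l ++ [b]) := by
  have := List.Lex.append_left (· < · : β → β → Prop) (t₁ := []) (t₂ := [b]) List.Lex.nil l
  simpa using this

/-- In a strictly decreasing list, the last entry is a lower bound. -/
private lemma auxC {β : Type*} [LinearOrder β] :
    ∀ {l : List β}, l.Pairwise (· > ·) → ∀ {y}, l.getLast? = some y → ∀ x ∈ l, y ≤ x := by
  intro l
  induction l with
  | nil => intro _ y hy; simp at hy
  | cons a t ih =>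
      intro hp y hy x hx
      rcases List.pairwise_cons.1 hp with ⟨ha, hp'⟩
      cases t with
      | nil => simp_all
      | cons b t' =>
          rw [List.getLast?_cons_cons] at hy
          have hyle : y ≤ b := ih hp' hy b (List.mem_cons_self)
          rcases List.mem_cons.1 hx with rfl | hx'
          · exact hyle.trans (le_of_lt (ha b (List.mem_cons_self)))
          · exact ih hp' hy x hx'

/-- The existence-and-uniqueness step in the construction of the embedding of
`(1+α)^γ` into `D_L(α·2^γ)`: given `γ_0 > ... > γ_{k-1}` in `γ`, values `a_j ∈ α`,
and decreasing lists `σ_j` for `j ≤ i` (with `σ_0 = ⟨γ_0⟩`, each `σ_j` ending in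
`γ_j`) such that `e(π_k(j)) = α·σ_j + a_j` is order-preserving on `{0,…,i}`,
there is exactly one `s ∈ {2^{γ_{i+1}}} ∪ {σ_j + 2^{γ_{i+1}} : j ≤ i}` making the
extended assignment order-preserving on `{0,…,i+1}`. -/
theorem stmt16 {γ α : Type*} [LinearOrder γ] [LinearOrder α]
    (Lle : ℕ → ℕ → Prop) (hL : IsLinearOrder ℕ Lle)
    (π : ∀ n, Equiv.Perm (Fin n)) (hπ : PermOf Lle π)
    (k i : ℕ) (hik : i + 1 < k)
    (c : Fin k → γ) (hc : ∀ u v : Fin k, u < v → c v < c u)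
    (a : Fin k → α) (σ : Fin k → List γ)
    (hchain : ∀ j : Fin k, (j : ℕ) ≤ i → (σ j).Chain' (· > ·))
    (h0 : σ ⟨0, by omega⟩ = [c ⟨0, by omega⟩])
    (hlast : ∀ j : Fin k, (j : ℕ) ≤ i → (σ j).getLast? = some (c j))
    (hmono : ∀ u v : Fin k, (u : ℕ) ≤ i → (v : ℕ) ≤ i →
      (((π k u : ℕ) < (π k v : ℕ)) ↔ PLt16 (σ u, a u) (σ v, a v))) :
    ∃! s : List γ,
      s.Chain' (· > ·) ∧
      (s = [c ⟨i + 1, hik⟩] ∨ ∃ j : Fin k, (j : ℕ) ≤ i ∧ s = σ j ++ [c ⟨i + 1, hik⟩]) ∧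
      (∀ u v : Fin k, (u : ℕ) ≤ i + 1 → (v : ℕ) ≤ i + 1 →
        (((π k u : ℕ) < (π k v : ℕ)) ↔
          PLt16 (Function.update σ ⟨i + 1, hik⟩ s u, a u)
                (Function.update σ ⟨i + 1, hik⟩ s v, a v))) := by
  classical
  set I : Fin k := ⟨i + 1, hik⟩ with hI
  set c' : γ := c I with hc'
  -- basic facts
  have hIne : ∀ j : Fin k, (j : ℕ) ≤ i → j ≠ I := by
    intro j hj h
    rw [Fin.ext_iff] at h
    simp [hI] at h; omega
  have hupd_ne : ∀ (s : List γ) (j : Fin k), (j : ℕ) ≤ i →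
      Function.update σ I s j = σ j := by
    intro s j hj
    exact Function.update_of_ne (hIne j hj) _ _
  have hpair : ∀ j : Fin k, (j : ℕ) ≤ i → (σ j).Pairwise (· > ·) := by
    intro j hj
    exact (List.isChain_iff_pairwise).1 (hchain j hj)
  have hcj : ∀ j : Fin k, (j : ℕ) ≤ i → c' < c j := by
    intro j hj
    refine hc j I ?_
    rw [Fin.lt_def]; simp [hI]; omega
  have hmem : ∀ j : Fin k, (j : ℕ) ≤ i → ∀ x ∈ σ j, c' < x := by
    intro j hj x hx
    exact lt_of_lt_of_le (hcj j hj) (auxC (hpair j hj) (hlast j hj) x hx)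
  have hne_nil : ∀ j : Fin k, (j : ℕ) ≤ i → σ j ≠ [] := by
    intro j hj h
    have := hlast j hj; rw [h] at this; simp at this
  -- `[c'] <lex σ j` for every `j ≤ i`
  have hsing : ∀ j : Fin k, (j : ℕ) ≤ i → List.Lex (· < ·) [c'] (σ j) := by
    intro j hj
    cases h : σ j with
    | nil => exact absurd h (hne_nil j hj)
    | cons x t =>
        refine List.Lex.rel ?_
        exact hmem j hj x (by rw [h]; exact List.mem_cons_self)
  -- distinct indices ≤ i have distinct lists
  have hinj : ∀ u v : Fin k, (u : ℕ) ≤ i → (v : ℕ) ≤ i → σ u = σ v → u = v := by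
    intro u v hu hv h
    by_contra hne
    have hlu := hlast u hu
    have hlv := hlast v hv
    rw [h, hlv] at hlu
    have hcc : c v = c u := by injection hlu
    rcases lt_trichotomy u v with h' | h' | h'
    · exact absurd hcc (ne_of_lt (hc u v h'))
    · exact hne h'
    · exact absurd hcc.symm (ne_of_lt (hc v u h'))
  have hπinj : ∀ u v : Fin k, (π k u : ℕ) = (π k v : ℕ) → u = v := by
    intro u v h
    exact (π k).injective (Fin.ext h)
  -- `σ u <lex σ v` whenever `π u < π v`, `u ≠ v`, both ≤ i
  have hlex : ∀ u v : Fin k, (u : ℕ) ≤ i → (v : ℕ) ≤ i →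
      (π k u : ℕ) < (π k v : ℕ) → u ≠ v → List.Lex (· < ·) (σ u) (σ v) := by
    intro u v hu hv h hne
    rcases (hmono u v hu hv).1 h with h' | ⟨h', _⟩
    · exact h'
    · exact absurd (hinj u v hu hv h') hne
  -- the core : from two admissible lists sandwiching some σ n we get False
  have key : ∀ s₁ s₂ : List γ,
      (∀ u v : Fin k, (u : ℕ) ≤ i + 1 → (v : ℕ) ≤ i + 1 →
        (((π k u : ℕ) < (π k v : ℕ)) ↔
          PLt16 (Function.update σ I s₁ u, a u) (Function.update σ I s₁ v, a v))) →
      (∀ u v : Fin k, (u : ℕ) ≤ i + 1 → (v : ℕ) ≤ i + 1 →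
        (((π k u : ℕ) < (π k v : ℕ)) ↔
          PLt16 (Function.update σ I s₂ u, a u) (Function.update σ I s₂ v, a v))) →
      ∀ n : Fin k, (n : ℕ) ≤ i →
        List.Lex (· < ·) s₁ (σ n) → List.Lex (· < ·) (σ n) s₂ → False := by
    intro s₁ s₂ hm₁ hm₂ n hn h₁ h₂
    have hIle : (I : ℕ) ≤ i + 1 := by simp [hI]
    have hnle : (n : ℕ) ≤ i + 1 := by omega
    have e₁ : (π k I : ℕ) < (π k n : ℕ) := by
      refine (hm₁ I n hIle hnle).2 ?_
      left
      rw [Function.update_self, hupd_ne s₁ n hn]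
      exact h₁
    have e₂ : (π k n : ℕ) < (π k I : ℕ) := by
      refine (hm₂ n I hnle hIle).2 ?_
      left
      rw [Function.update_self, hupd_ne s₂ n hn]
      exact h₂
    omega
  -- uniqueness
  have uniq : ∀ s₁ s₂ : List γ,
      (s₁ = [c'] ∨ ∃ j : Fin k, (j : ℕ) ≤ i ∧ s₁ = σ j ++ [c']) →
      (s₂ = [c'] ∨ ∃ j : Fin k, (j : ℕ) ≤ i ∧ s₂ = σ j ++ [c']) →
      (∀ u v : Fin k, (u : ℕ) ≤ i + 1 → (v : ℕ) ≤ i + 1 →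
        (((π k u : ℕ) < (π k v : ℕ)) ↔
          PLt16 (Function.update σ I s₁ u, a u) (Function.update σ I s₁ v, a v))) →
      (∀ u v : Fin k, (u : ℕ) ≤ i + 1 → (v : ℕ) ≤ i + 1 →
        (((π k u : ℕ) < (π k v : ℕ)) ↔
          PLt16 (Function.update σ I s₂ u, a u) (Function.update σ I s₂ v, a v))) →
      s₁ = s₂ := by
    intro s₁ s₂ hc₁ hc₂ hm₁ hm₂
    rcases hc₁ with rfl | ⟨m, hm, rfl⟩
    · rcases hc₂ with rfl | ⟨n, hn, rfl⟩
      · rfl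
      · exact absurd (key _ _ hm₁ hm₂ n hn (hsing n hn) (auxB _ _)) (by simp)
    · rcases hc₂ with rfl | ⟨n, hn, rfl⟩
      · exact absurd (key _ _ hm₂ hm₁ m hm (hsing m hm) (auxB _ _)) (by simp)
      · rcases lt_trichotomy (σ m) (σ n) with h | h | h
        · have hmn : List.Lex (· < ·) (σ m) (σ n) := h
          have : List.Lex (· < ·) (σ m ++ [c']) (σ n) := auxA hmn (hmem n hn)
          exact absurd (key _ _ hm₁ hm₂ n hn this (auxB _ _)) (by simp)
        · rw [h]
        · have hmn : List.Lex (· < ·) (σ n) (σ m) := h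
          have : List.Lex (· < ·) (σ n ++ [c']) (σ m) := auxA hmn (hmem m hm)
          exact absurd (key _ _ hm₂ hm₁ m hm this (auxB _ _)) (by simp)
  -- now existence: pick the candidate
  have lexasymm : ∀ l m : List γ, List.Lex (· < ·) l m → List.Lex (· < ·) m l → False :=
    fun l m h h' => (List.Lex.asymm (· < · : γ → γ → Prop)).asymm l m h h'
  have hle : ∀ v : Fin k, (v : ℕ) ≤ i + 1 → v ≠ I → (v : ℕ) ≤ i := by
    intro v hv hne
    have : (v : ℕ) ≠ i + 1 := fun h => hne (Fin.ext (by simp [hI, h]))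
    omega
  -- order-preservation follows from the two one-sided lex conditions
  have monoOf : ∀ s : List γ,
      (∀ u : Fin k, (u : ℕ) ≤ i → (π k u : ℕ) < (π k I : ℕ) → List.Lex (· < ·) (σ u) s) →
      (∀ u : Fin k, (u : ℕ) ≤ i → (π k I : ℕ) < (π k u : ℕ) → List.Lex (· < ·) s (σ u)) →
      (∀ u v : Fin k, (u : ℕ) ≤ i + 1 → (v : ℕ) ≤ i + 1 →
        (((π k u : ℕ) < (π k v : ℕ)) ↔
          PLt16 (Function.update σ I s u, a u) (Function.update σ I s v, a v))) := by
    intro s G1 G2 u v hu hv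
    by_cases hui : u = I <;> by_cases hvi : v = I
    · subst hui; subst hvi
      simp only [Function.update_self]
      constructor
      · intro h; exact absurd h (lt_irrefl _)
      · rintro (h | ⟨-, h⟩)
        · exact (lexasymm _ _ h h).elim
        · exact absurd h (lt_irrefl _)
    · subst hui
      have hv' : (v : ℕ) ≤ i := hle v hv hvi
      rw [Function.update_self, hupd_ne s v hv']
      constructor
      · intro h; exact Or.inl (G2 v hv' h)
      · intro h
        by_contra hn
        have h1 : (π k v : ℕ) ≠ (π k I : ℕ) := fun he => hvi (hπinj v I he)
        have h2 : (π k v : ℕ) < (π k I : ℕ) := by omega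
        have h3 := G1 v hv' h2
        rcases h with h | ⟨he, -⟩
        · exact lexasymm _ _ h h3
        · have he' : s = σ v := he
          rw [he'] at h3; exact lexasymm _ _ h3 h3
    · subst hvi
      have hu' : (u : ℕ) ≤ i := hle u hu hui
      rw [Function.update_self, hupd_ne s u hu']
      constructor
      · intro h; exact Or.inl (G1 u hu' h)
      · intro h
        by_contra hn
        have h1 : (π k u : ℕ) ≠ (π k I : ℕ) := fun he => hui (hπinj u I he)
        have h2 : (π k I : ℕ) < (π k u : ℕ) := by omega
        have h3 := G2 u hu' h2
        rcases h with h | ⟨he, -⟩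
        · exact lexasymm _ _ h h3
        · have he' : σ u = s := he
          rw [he'] at h3; exact lexasymm _ _ h3 h3
    · have hu' : (u : ℕ) ≤ i := hle u hu hui
      have hv' : (v : ℕ) ≤ i := hle v hv hvi
      rw [hupd_ne s u hu', hupd_ne s v hv']
      exact hmono u v hu' hv'
  -- existence
  set T : Finset (Fin k) :=
    Finset.univ.filter (fun j => (j : ℕ) ≤ i ∧ (π k j : ℕ) < (π k I : ℕ)) with hT
  have hmemT : ∀ j : Fin k, j ∈ T ↔ ((j : ℕ) ≤ i ∧ (π k j : ℕ) < (π k I : ℕ)) := by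
    intro j; simp [hT]
  by_cases hTne : T.Nonempty
  · obtain ⟨j₀, hj₀T, hj₀max⟩ := T.exists_max_image (fun j => (π k j : ℕ)) hTne
    obtain ⟨hj₀i, hj₀lt⟩ := (hmemT j₀).1 hj₀T
    have G1 : ∀ u : Fin k, (u : ℕ) ≤ i → (π k u : ℕ) < (π k I : ℕ) →
        List.Lex (· < ·) (σ u) (σ j₀ ++ [c']) := by
      intro u hu hlt
      have huT : u ∈ T := (hmemT u).2 ⟨hu, hlt⟩
      by_cases he : u = j₀
      · subst he; exact auxB _ _
      · have h1 : (π k u : ℕ) ≤ (π k j₀ : ℕ) := hj₀max u huT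
        have h2 : (π k u : ℕ) ≠ (π k j₀ : ℕ) := fun hh => he (hπinj u j₀ hh)
        have h3 : List.Lex (· < ·) (σ u) (σ j₀) :=
          hlex u j₀ hu hj₀i (lt_of_le_of_ne h1 h2) he
        exact List.Lex.append_right _ _ h3
    have G2 : ∀ u : Fin k, (u : ℕ) ≤ i → (π k I : ℕ) < (π k u : ℕ) →
        List.Lex (· < ·) (σ j₀ ++ [c']) (σ u) := by
      intro u hu hlt
      have h1 : (π k j₀ : ℕ) < (π k u : ℕ) := lt_trans hj₀lt hlt
      have he : j₀ ≠ u := fun hh => by rw [hh] at h1; omega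
      exact auxA (hlex j₀ u hj₀i hu h1 he) (hmem u hu)
    refine ⟨σ j₀ ++ [c'], ⟨?_, Or.inr ⟨j₀, hj₀i, rfl⟩, monoOf _ G1 G2⟩, ?_⟩
    · show List.IsChain _ _
      rw [List.isChain_iff_pairwise, List.pairwise_append]
      refine ⟨hpair j₀ hj₀i, List.pairwise_singleton _ _, ?_⟩
      intro x hx y hy
      rw [List.mem_singleton] at hy
      subst hy
      exact hmem j₀ hj₀i x hx
    · rintro s' ⟨-, cand', mono'⟩
      exact uniq s' _ cand' (Or.inr ⟨j₀, hj₀i, rfl⟩) mono' (monoOf _ G1 G2)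
  · refine ⟨[c'], ⟨List.isChain_singleton _, Or.inl rfl, ?_⟩, ?_⟩
    · refine monoOf _ ?_ ?_
      · intro u hu hlt
        exact absurd ⟨u, (hmemT u).2 ⟨hu, hlt⟩⟩ hTne
      · intro u hu _
        exact hsing u hu
    · rintro s' ⟨-, cand', mono'⟩
      refine uniq s' _ cand' (Or.inl rfl) mono' (monoOf _ ?_ ?_)
      · intro u hu hlt
        exact absurd ⟨u, (hmemT u).2 ⟨hu, hlt⟩⟩ hTne
      · intro u hu _
        exact hsing u hu
end

section
/- Let D be a predilator with trace elements (σ,m), (τ,n), (ρ,k) pairwise distinct, and for distinct trace elements define p (the minimal secure number) as in Girard's theory. Then p_ρ^τ ≥ min(p_ρ^σ, p_σ^τ). -/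
/-- A (coded) predilator: a monotone functor from finite linear orders
`{0,…,n-1}` (with order embeddings) to linear orders, equipped with natural
support functions satisfying the support condition. -/
structure Predilator where
  obj : ℕ → Type
  lt : ∀ n, obj n → obj n → Prop
  str : ∀ n, IsStrictTotalOrder (obj n) (lt n)
  map : ∀ {m n : ℕ}, (Fin m ↪o Fin n) → obj m → obj n
  map_id : ∀ (n : ℕ) (σ : obj n),
    map (OrderEmbedding.ofStrictMono id strictMono_id) σ = σ
  map_comp : ∀ {m n k : ℕ} (f : Fin m ↪o Fin n) (g : Fin n ↪o Fin k) (σ : obj m),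
    map (f.trans g) σ = map g (map f σ)
  map_lt : ∀ {m n : ℕ} (f : Fin m ↪o Fin n) (σ τ : obj m),
    lt m σ τ → lt n (map f σ) (map f τ)
  monotone : ∀ {m n : ℕ} (f g : Fin m ↪o Fin n), (∀ i, f i ≤ g i) →
    ∀ σ : obj m, ¬ lt n (map g σ) (map f σ)
  supp : ∀ n, obj n → Finset (Fin n)
  supp_natural : ∀ {m n : ℕ} (f : Fin m ↪o Fin n) (σ : obj m),
    supp n (map f σ) = (supp m σ).map f.toEmbedding
  supp_cond : ∀ {m n : ℕ} (f : Fin m ↪o Fin n) (τ : obj n),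
    ↑(supp n τ) ⊆ Set.range f → ∃ σ : obj m, map f σ = τ

/-- The embedding `e_i : n → 2n` with `e_i(i) = 2i+1` and `e_i(j) = 2j` for `j ≠ i`. -/
def eEmb (n : ℕ) (i : Fin n) : Fin n ↪o Fin (2 * n) :=
  OrderEmbedding.ofStrictMono
    (fun j => if j = i then ⟨2 * (j : ℕ) + 1, by have := j.isLt; omega⟩
              else ⟨2 * (j : ℕ), by have := j.isLt; omega⟩)
    (by
      intro j k hjk
      simp only []
      split <;> split <;> simp only [Fin.mk_lt_mk] <;> omega)

/-- `π` is the priority permutation of the trace element `σ`: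
`D(e_{π(0)})(σ) > … > D(e_{π(n-1)})(σ)`. -/
def IsPriorityPerm (D : Predilator) {n : ℕ} (σ : D.obj n) (π : Equiv.Perm (Fin n)) : Prop :=
  ∀ i j : Fin n, i < j →
    D.lt (2 * n) (D.map (eEmb n (π j)) σ) (D.map (eEmb n (π i)) σ)

/-- `p ≤ P_σ^τ`: the permutations `π_σ` and `π_τ` induce the same relative order
on indices below `p`. -/
def Compatible {m n : ℕ} (πσ : Equiv.Perm (Fin m)) (πτ : Equiv.Perm (Fin n))
    (p : ℕ) : Prop :=
  ∃ hm : p ≤ m, ∃ hn : p ≤ n, ∀ i j : Fin p,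
    (πσ (Fin.castLE hm i) < πσ (Fin.castLE hm j) ↔
      πτ (Fin.castLE hn i) < πτ (Fin.castLE hn j))

/-- `f` and `g` agree on the first `p` priority positions:
`f(π_σ(i)) = g(π_τ(i))` for all `i < p`. -/
def Agrees {m n N : ℕ} (f : Fin m ↪o Fin N) (g : Fin n ↪o Fin N)
    (πσ : Equiv.Perm (Fin m)) (πτ : Equiv.Perm (Fin n)) (p : ℕ) : Prop :=
  ∀ i : ℕ, i < p → ∀ him : i < m, ∀ hin : i < n,
    ((f (πσ ⟨i, him⟩) : ℕ) = (g (πτ ⟨i, hin⟩) : ℕ))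

/-- `p` is secure for the distinct trace elements `(σ,m)` and `(τ,n)`: the truth
value of `D(f)(σ) < D(g)(τ)` depends only on the values `f(π_σ(i)) = g(π_τ(i))`
for `i < p`. -/
def Secure (D : Predilator) {m n : ℕ} (σ : D.obj m) (τ : D.obj n)
    (πσ : Equiv.Perm (Fin m)) (πτ : Equiv.Perm (Fin n)) (p : ℕ) : Prop :=
  Compatible πσ πτ p ∧
  ∀ (f f' : Fin m ↪o Fin (m + n)) (g g' : Fin n ↪o Fin (m + n)),
    Agrees f g πσ πτ p → Agrees f' g' πσ πτ p →
    (D.lt (m + n) (D.map f σ) (D.map g τ) ↔ D.lt (m + n) (D.map f' σ) (D.map g' τ))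

/-- `p = p_σ^τ` is the minimal secure number. -/
def MinSecure (D : Predilator) {m n : ℕ} (σ : D.obj m) (τ : D.obj n)
    (πσ : Equiv.Perm (Fin m)) (πτ : Equiv.Perm (Fin n)) (p : ℕ) : Prop :=
  Secure D σ τ πσ πτ p ∧ ∀ q : ℕ, q < p → ¬ Secure D σ τ πσ πτ q

section AuxLemmas

/-- Lift an order embedding through another order embedding containing its range. -/
lemma lift_emb {A s : ℕ} {γ : Type*} [LinearOrder γ] (f : Fin A ↪o γ) (j : Fin s ↪o γ)
    (h : ∀ x, f x ∈ Set.range j) : ∃ w : Fin A ↪o Fin s, ∀ x, j (w x) = f x := by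
  choose w hw using h
  refine ⟨OrderEmbedding.ofStrictMono w ?_, fun x => hw x⟩
  intro x y hxy
  have hj : j (w x) < j (w y) := by rw [hw, hw]; exact f.strictMono hxy
  exact j.lt_iff_lt.mp hj

lemma card_filter_lt_fin {m : ℕ} (x : Fin m) :
    (Finset.univ.filter (fun y : Fin m => y < x)).card = (x : ℕ) := by
  have h : Finset.univ.filter (fun y : Fin m => y < x) = Finset.Iio x := by
    ext y; simp
  rw [h, Fin.card_Iio]

noncomputable def qval {m A : ℕ} (g : Fin m ↪o Fin A) (a : Fin A) : ℚ :=
  ((Finset.univ.filter (fun x => g x < a)).card : ℚ) +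
    (if ∃ x, g x = a then 0 else (((a : ℕ) : ℚ) + 1) / ((A : ℚ) + 2) - 1)

lemma qval_common {m A : ℕ} (g : Fin m ↪o Fin A) (x : Fin m) :
    qval g (g x) = (x : ℕ) := by
  have h1 : (∃ y, g y = g x) := ⟨x, rfl⟩
  have h2 : Finset.univ.filter (fun y => g y < g x) =
      Finset.univ.filter (fun y : Fin m => y < x) := by
    ext y; simp [g.lt_iff_lt]
  rw [qval, if_pos h1, h2, card_filter_lt_fin]
  ring

lemma qval_strictMono {m A : ℕ} (g : Fin m ↪o Fin A) : StrictMono (qval g) := by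
  intro a a' haa
  set c := (Finset.univ.filter (fun x => g x < a)).card with hc
  set c' := (Finset.univ.filter (fun x => g x < a')).card with hc'
  have hcmono : c ≤ c' := by
    apply Finset.card_le_card
    intro y hy
    simp only [Finset.mem_filter, Finset.mem_univ, true_and] at hy ⊢
    exact hy.trans haa
  have hεpos : (0 : ℚ) < (((a' : ℕ) : ℚ) + 1) / ((A : ℚ) + 2) := by positivity
  have hεlt : (((a : ℕ) : ℚ) + 1) / ((A : ℚ) + 2) < 1 := by
    rw [div_lt_one (by positivity)]
    have h := a.isLt
    have h1 : (a : ℕ) + 1 < A + 2 := by omega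
    exact_mod_cast h1
  have hclt : (∃ x, g x = a) → c < c' := by
    rintro ⟨x, hx⟩
    apply Finset.card_lt_card
    rw [Finset.ssubset_iff_of_subset]
    · refine ⟨x, ?_, ?_⟩
      · simp only [Finset.mem_filter, Finset.mem_univ, true_and]
        rw [hx]; exact haa
      · simp only [Finset.mem_filter, Finset.mem_univ, true_and]
        rw [hx]; exact lt_irrefl a
    · intro y hy
      simp only [Finset.mem_filter, Finset.mem_univ, true_and] at hy ⊢
      exact hy.trans haa
  have hεmono : (((a : ℕ) : ℚ) + 1) / ((A : ℚ) + 2) <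
      (((a' : ℕ) : ℚ) + 1) / ((A : ℚ) + 2) := by
    have haa' : ((a : ℕ) : ℚ) + 1 < ((a' : ℕ) : ℚ) + 1 := by
      have h : (a : ℕ) < (a' : ℕ) := haa
      linarith [(by exact_mod_cast h : ((a : ℕ) : ℚ) < ((a' : ℕ) : ℚ))]
    exact div_lt_div_of_pos_right haa' (by positivity)
  unfold qval
  by_cases h1 : ∃ x, g x = a <;> by_cases h2 : ∃ x, g x = a'
  · rw [if_pos h1, if_pos h2]
    have h3 := hclt h1
    simpa using (by exact_mod_cast h3 : (c : ℚ) < c')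
  · rw [if_pos h1, if_neg h2]
    have h3 : (c : ℚ) + 1 ≤ c' := by exact_mod_cast hclt h1
    linarith [hεpos]
  · rw [if_neg h1, if_pos h2]
    have h3 : (c : ℚ) ≤ c' := by exact_mod_cast hcmono
    linarith [hεlt]
  · rw [if_neg h1, if_neg h2]
    have h3 : (c : ℚ) ≤ c' := by exact_mod_cast hcmono
    linarith [hεmono]

lemma ext_fin {N s : ℕ} (S : Finset (Fin N)) (h1 : S.card ≤ s) (h2 : s ≤ N) :
    ∃ j : Fin s ↪o Fin N, ∀ a ∈ S, a ∈ Set.range j := by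
  obtain ⟨T, hST, hT⟩ := Finset.exists_superset_card_eq h1 (by simpa using h2)
  exact ⟨T.orderEmbOfFin hT, fun a ha => by
    rw [Finset.range_orderEmbOfFin]; exact_mod_cast hST ha⟩

lemma ext_rat (S : Finset ℚ) (s : ℕ) (h1 : S.card ≤ s) :
    ∃ j : Fin s ↪o ℚ, ∀ a ∈ S, a ∈ Set.range j := by
  obtain ⟨T, hST, hT⟩ := Infinite.exists_superset_card_eq S s h1
  exact ⟨T.orderEmbOfFin hT, fun a ha => by
    rw [Finset.range_orderEmbOfFin]; exact_mod_cast hST ha⟩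

/-- Compress two embeddings into a common small codomain. -/
lemma compress_emb {k n N : ℕ} (hN : k + n ≤ N) (f : Fin k ↪o Fin N) (h : Fin n ↪o Fin N) :
    ∃ (F : Fin k ↪o Fin (k + n)) (H : Fin n ↪o Fin (k + n)) (j : Fin (k + n) ↪o Fin N),
      (∀ x, j (F x) = f x) ∧ (∀ y, j (H y) = h y) := by
  set S : Finset (Fin N) := Finset.univ.image f ∪ Finset.univ.image h with hS
  have hcard : S.card ≤ k + n := by
    refine (Finset.card_union_le _ _).trans ?_
    have e1 : (Finset.univ.image (f : Fin k → Fin N)).card ≤ k :=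
      (Finset.card_image_le).trans (by simp)
    have e2 : (Finset.univ.image (h : Fin n → Fin N)).card ≤ n :=
      (Finset.card_image_le).trans (by simp)
    omega
  obtain ⟨j, hj⟩ := ext_fin S hcard hN
  obtain ⟨F, hF⟩ := lift_emb f j (fun x => hj _ (by simp [hS]))
  obtain ⟨H, hH⟩ := lift_emb h j (fun y => hj _ (by simp [hS]))
  exact ⟨F, H, j, hF, hH⟩

/-- Amalgamation of finite linear orders over a common part. -/
lemma amalg_emb {m A B : ℕ} (g₁ : Fin m ↪o Fin A) (g₂ : Fin m ↪o Fin B) :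
    ∃ (w₁ : Fin A ↪o Fin (A + B)) (w₂ : Fin B ↪o Fin (A + B)),
      ∀ x, w₁ (g₁ x) = w₂ (g₂ x) := by
  set q₁ : Fin A ↪o ℚ := OrderEmbedding.ofStrictMono _ (qval_strictMono g₁) with hq₁
  set q₂ : Fin B ↪o ℚ := OrderEmbedding.ofStrictMono _ (qval_strictMono g₂) with hq₂
  set S : Finset ℚ := Finset.univ.image q₁ ∪ Finset.univ.image q₂ with hS
  have hcard : S.card ≤ A + B := by
    refine (Finset.card_union_le _ _).trans ?_
    have e1 : (Finset.univ.image (q₁ : Fin A → ℚ)).card ≤ A :=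
      (Finset.card_image_le).trans (by simp)
    have e2 : (Finset.univ.image (q₂ : Fin B → ℚ)).card ≤ B :=
      (Finset.card_image_le).trans (by simp)
    omega
  obtain ⟨j, hj⟩ := ext_rat S (A + B) hcard
  obtain ⟨w₁, hw₁⟩ := lift_emb q₁ j (fun x => hj _ (by simp [hS]))
  obtain ⟨w₂, hw₂⟩ := lift_emb q₂ j (fun x => hj _ (by simp [hS]))
  refine ⟨w₁, w₂, fun x => ?_⟩
  apply j.injective
  rw [hw₁, hw₂]
  show qval g₁ (g₁ x) = qval g₂ (g₂ x)
  rw [qval_common, qval_common]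

/-- Comparisons in `D` transfer along embeddings. -/
lemma D_lt_map_iff (D : Predilator) {N N' : ℕ} (j : Fin N ↪o Fin N') (a b : D.obj N) :
    D.lt N' (D.map j a) (D.map j b) ↔ D.lt N a b := by
  have hs := D.str N
  have hs' := D.str N'
  constructor
  · intro h
    rcases (haveI := hs; trichotomous_of (D.lt N) a b) with h' | h' | h'
    · exact h'
    · subst h'
      exact absurd h (hs'.irrefl _)
    · exact absurd (hs'.trans _ _ _ h (D.map_lt j b a h')) (hs'.irrefl _)
  · exact D.map_lt j a b

lemma compatible_mono {m n : ℕ} {πσ : Equiv.Perm (Fin m)} {πτ : Equiv.Perm (Fin n)}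
    {p q : ℕ} (h : Compatible πσ πτ p) (hq : q ≤ p) : Compatible πσ πτ q := by
  obtain ⟨hm, hn, hcomp⟩ := h
  exact ⟨hq.trans hm, hq.trans hn, fun i j =>
    hcomp (Fin.castLE hq i) (Fin.castLE hq j)⟩

lemma insecure_witness (D : Predilator) {m n : ℕ} (σ : D.obj m) (τ : D.obj n)
    (πσ : Equiv.Perm (Fin m)) (πτ : Equiv.Perm (Fin n)) (p : ℕ)
    (hComp : Compatible πσ πτ p) (hIns : ¬ Secure D σ τ πσ πτ p) :
    (∃ f g, Agrees f g πσ πτ p ∧ D.lt (m + n) (D.map f σ) (D.map g τ)) ∧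
    (∃ f g, Agrees f g πσ πτ p ∧ ¬ D.lt (m + n) (D.map f σ) (D.map g τ)) := by
  rw [Secure, not_and] at hIns
  have h := hIns hComp
  push_neg at h
  obtain ⟨f, f', g, g', hfg, hfg', hne⟩ := h
  rcases hne with ⟨hA, hB⟩ | ⟨hA, hB⟩
  · exact ⟨⟨f, g, hfg, hA⟩, ⟨f', g', hfg', hB⟩⟩
  · exact ⟨⟨f', g', hfg', hB⟩, ⟨f, g, hfg, hA⟩⟩

/-- The key combination step: witnesses for `(ρ,σ)` and `(σ,τ)` combine to a
witness for `(ρ,τ)`, preserving agreement at `p` and the comparison outcome. -/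
lemma combine_emb (D : Predilator) {k m n : ℕ} (ρ : D.obj k) (σ : D.obj m) (τ : D.obj n)
    (πρ : Equiv.Perm (Fin k)) (πσ : Equiv.Perm (Fin m)) (πτ : Equiv.Perm (Fin n))
    (p : ℕ) (hpm : p ≤ m)
    (f : Fin k ↪o Fin (k + m)) (g : Fin m ↪o Fin (k + m))
    (G : Fin m ↪o Fin (m + n)) (h : Fin n ↪o Fin (m + n))
    (hfg : Agrees f g πρ πσ p) (hGh : Agrees G h πσ πτ p) :
    ∃ (F : Fin k ↪o Fin (k + n)) (H : Fin n ↪o Fin (k + n)),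
      Agrees F H πρ πτ p ∧
      (D.lt (k + m) (D.map f ρ) (D.map g σ) →
        D.lt (m + n) (D.map G σ) (D.map h τ) →
        D.lt (k + n) (D.map F ρ) (D.map H τ)) ∧
      (¬ D.lt (k + m) (D.map f ρ) (D.map g σ) →
        ¬ D.lt (m + n) (D.map G σ) (D.map h τ) →
        ¬ D.lt (k + n) (D.map F ρ) (D.map H τ)) := by
  obtain ⟨w₁, w₂, hw⟩ := amalg_emb g G
  have hN : k + n ≤ (k + m) + (m + n) := by omega
  obtain ⟨F, H, j, hjF, hjH⟩ := compress_emb hN (f.trans w₁) (h.trans w₂)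
  have hs := D.str ((k + m) + (m + n))
  -- key equalities
  have emid : D.map w₁ (D.map g σ) = D.map w₂ (D.map G σ) := by
    rw [← D.map_comp, ← D.map_comp]
    congr 1
    exact RelEmbedding.ext (fun x => by simpa using hw x)
  have eF : D.map j (D.map F ρ) = D.map w₁ (D.map f ρ) := by
    rw [← D.map_comp, ← D.map_comp]
    congr 1
    exact RelEmbedding.ext (fun x => by simpa using hjF x)
  have eH : D.map j (D.map H τ) = D.map w₂ (D.map h τ) := by
    rw [← D.map_comp, ← D.map_comp]
    congr 1
    exact RelEmbedding.ext (fun x => by simpa using hjH x)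
  refine ⟨F, H, ?_, ?_, ?_⟩
  · -- Agreement
    intro i hip hik hin
    have him : i < m := lt_of_lt_of_le hip hpm
    have e1 : f (πρ ⟨i, hik⟩) = g (πσ ⟨i, him⟩) := Fin.ext (hfg i hip hik him)
    have e2 : G (πσ ⟨i, him⟩) = h (πτ ⟨i, hin⟩) := Fin.ext (hGh i hip him hin)
    have e3 : j (F (πρ ⟨i, hik⟩)) = j (H (πτ ⟨i, hin⟩)) := by
      rw [hjF, hjH]
      show w₁ (f (πρ ⟨i, hik⟩)) = w₂ (h (πτ ⟨i, hin⟩))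
      rw [e1, hw, e2]
    exact congrArg Fin.val (j.injective e3)
  · -- positive case
    intro h1 h2
    have t1 : D.lt ((k + m) + (m + n)) (D.map w₁ (D.map f ρ)) (D.map w₁ (D.map g σ)) :=
      D.map_lt w₁ _ _ h1
    have t2 : D.lt ((k + m) + (m + n)) (D.map w₂ (D.map G σ)) (D.map w₂ (D.map h τ)) :=
      D.map_lt w₂ _ _ h2
    have t3 : D.lt ((k + m) + (m + n)) (D.map w₁ (D.map f ρ)) (D.map w₂ (D.map h τ)) :=
      hs.trans _ _ _ t1 (emid ▸ t2)
    exact (D_lt_map_iff D j _ _).mp (by rw [eF, eH]; exact t3)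
  · -- negative case
    intro h1 h2 hcon
    have tcon : D.lt ((k + m) + (m + n)) (D.map w₁ (D.map f ρ)) (D.map w₂ (D.map h τ)) := by
      rw [← eF, ← eH]; exact D.map_lt j _ _ hcon
    have nh1 : ¬ D.lt ((k + m) + (m + n)) (D.map w₁ (D.map f ρ)) (D.map w₁ (D.map g σ)) :=
      fun hx => h1 ((D_lt_map_iff D w₁ _ _).mp hx)
    have nh2 : ¬ D.lt ((k + m) + (m + n)) (D.map w₂ (D.map G σ)) (D.map w₂ (D.map h τ)) :=
      fun hx => h2 ((D_lt_map_iff D w₂ _ _).mp hx)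
    rcases (haveI := hs; trichotomous_of (D.lt ((k + m) + (m + n))) (D.map w₂ (D.map G σ)) (D.map w₂ (D.map h τ))) with hb | hb | hb
    · exact nh2 hb
    · exact nh1 (by rw [emid, hb]; exact tcon)
    · exact nh1 (by rw [emid]; exact hs.trans _ _ _ tcon hb)

end AuxLemmas

/-- For three pairwise distinct trace elements `(ρ,k)`, `(σ,m)`, `(τ,n)` of a
predilator `D`, the minimal secure numbers satisfy `p_ρ^τ ≥ min (p_ρ^σ) (p_σ^τ)`. -/
theorem stmt18 (D : Predilator) {k m n : ℕ}
    (ρ : D.obj k) (σ : D.obj m) (τ : D.obj n)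
    (hρ : D.supp k ρ = Finset.univ) (hσ : D.supp m σ = Finset.univ)
    (hτ : D.supp n τ = Finset.univ)
    (hρσ : ¬ (k = m ∧ HEq ρ σ)) (hστ : ¬ (m = n ∧ HEq σ τ))
    (hρτ : ¬ (k = n ∧ HEq ρ τ))
    (πρ : Equiv.Perm (Fin k)) (πσ : Equiv.Perm (Fin m)) (πτ : Equiv.Perm (Fin n))
    (hπρ : IsPriorityPerm D ρ πρ) (hπσ : IsPriorityPerm D σ πσ)
    (hπτ : IsPriorityPerm D τ πτ)
    (p₁ p₂ p₃ : ℕ)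
    (h₁ : MinSecure D ρ σ πρ πσ p₁) (h₂ : MinSecure D σ τ πσ πτ p₂)
    (h₃ : MinSecure D ρ τ πρ πτ p₃) :
    min p₁ p₂ ≤ p₃ := by
  by_contra hlt
  push_neg at hlt
  have h31 : p₃ < p₁ := lt_of_lt_of_le hlt (min_le_left _ _)
  have h32 : p₃ < p₂ := lt_of_lt_of_le hlt (min_le_right _ _)
  have hC1 : Compatible πρ πσ p₃ := compatible_mono h₁.1.1 h31.le
  have hC2 : Compatible πσ πτ p₃ := compatible_mono h₂.1.1 h32.le
  obtain ⟨⟨f, g, hfg, hpos1⟩, ⟨f', g', hfg', hneg1⟩⟩ :=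
    insecure_witness D ρ σ πρ πσ p₃ hC1 (h₁.2 p₃ h31)
  obtain ⟨⟨G, h, hGh, hpos2⟩, ⟨G', h', hGh', hneg2⟩⟩ :=
    insecure_witness D σ τ πσ πτ p₃ hC2 (h₂.2 p₃ h32)
  obtain ⟨hpk, hpm, _⟩ := hC1
  obtain ⟨F, H, hFH, hposimp, _⟩ :=
    combine_emb D ρ σ τ πρ πσ πτ p₃ hpm f g G h hfg hGh
  obtain ⟨F', H', hFH', _, hnegimp⟩ :=
    combine_emb D ρ σ τ πρ πσ πτ p₃ hpm f' g' G' h' hfg' hGh'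
  have hiff := h₃.1.2 F F' H H' hFH hFH'
  exact hnegimp hneg1 hneg2 (hiff.mp (hposimp hpos1 hpos2))
end

section
/- Let D be a predilator and (σ,n) an element of its trace with priority permutation π_σ. For any linear order α and finite subsets a, b ⊆ α of size n, writing a^σ_i for the π_σ(i)-th element of a in increasing enumeration, the extension order satisfies: (σ,a) < (σ,b) in D̄(α) if and only if there is j < n with a^σ_j < b^σ_j and a^σ_i = b^σ_i for all i < j. -/
/-- The order embedding `Fin n ↪o Fin c.card` induced by the inclusion of a
finset `a ⊆ c` with `a.card = n` (the map `|ι_a|` on position indices). -/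
noncomputable def inclEmb {α : Type*} [LinearOrder α] {n : ℕ} (a c : Finset α)
    (h : a ⊆ c) (ha : a.card = n) : Fin n ↪o Fin c.card :=
  OrderEmbedding.ofStrictMono
    (fun i => (c.orderIsoOfFin rfl).symm
      ⟨(a.orderIsoOfFin ha i : α), h (a.orderIsoOfFin ha i).2⟩)
    (by
      intro i j hij
      exact (OrderIso.lt_iff_lt _).mpr (Subtype.mk_lt_mk.mpr ((a.orderIsoOfFin ha).lt_iff_lt.mpr hij)))

lemma Dtrich (D : Predilator) {N : ℕ} (x y : D.obj N) : D.lt N x y ∨ x = y ∨ D.lt N y x :=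
  by
    have h := (D.str N).trichotomous x y
    by_cases h1 : D.lt N x y
    · exact Or.inl h1
    · by_cases h2 : D.lt N y x
      · exact Or.inr (Or.inr h2)
      · exact Or.inr (Or.inl (h h1 h2))

lemma Dirrefl (D : Predilator) {N : ℕ} (x : D.obj N) : ¬ D.lt N x x := (D.str N).irrefl x

lemma Dtrans (D : Predilator) {N : ℕ} {x y z : D.obj N} :
    D.lt N x y → D.lt N y z → D.lt N x z :=
  fun h1 h2 => (D.str N).trans x y z h1 h2

lemma Dasymm (D : Predilator) {N : ℕ} {x y : D.obj N} (h : D.lt N x y) : ¬ D.lt N y x :=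
  fun h2 => Dirrefl D x (Dtrans D h h2)

lemma emb_eq_of_image_eq {m N : ℕ} (f g : Fin m ↪o Fin N)
    (h : Finset.univ.map f.toEmbedding = Finset.univ.map g.toEmbedding) : ∀ x, f x = g x := by
  have hc : (Finset.univ.map f.toEmbedding).card = m := by simp
  have hf : ∀ x, f x ∈ Finset.univ.map f.toEmbedding := by
    intro x; simp [Finset.mem_map]
  have hg : ∀ x, g x ∈ Finset.univ.map f.toEmbedding := by
    intro x; rw [h]; simp [Finset.mem_map]
  have h1 := Finset.orderEmbOfFin_unique hc hf f.strictMono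
  have h2 := Finset.orderEmbOfFin_unique hc hg g.strictMono
  intro x
  rw [show f x = _ from congrFun h1 x, show g x = _ from congrFun h2 x]

lemma D_lt_of_le (D : Predilator) {n N : ℕ} (σ : D.obj n) (hσ : D.supp n σ = Finset.univ)
    (f g : Fin n ↪o Fin N) (hle : ∀ x, f x ≤ g x) (hne : ∃ x, f x ≠ g x) :
    D.lt N (D.map f σ) (D.map g σ) := by
  rcases Dtrich D (D.map f σ) (D.map g σ) with h | h | h
  · exact h
  · exfalso
    have hs : D.supp N (D.map f σ) = D.supp N (D.map g σ) := by rw [h]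
    rw [D.supp_natural, D.supp_natural, hσ] at hs
    obtain ⟨x, hx⟩ := hne
    exact hx (emb_eq_of_image_eq f g hs x)
  · exact absurd h (D.monotone f g hle σ)

lemma map_lt_iff (D : Predilator) {N M : ℕ} (u : Fin N ↪o Fin M) (x y : D.obj N) :
    D.lt M (D.map u x) (D.map u y) ↔ D.lt N x y := by
  constructor
  · intro h
    rcases Dtrich D x y with h' | h' | h'
    · exact h'
    · subst h'; exact absurd h (Dirrefl D _)
    · exact absurd h (Dasymm D (D.map_lt u _ _ h'))
  · exact D.map_lt u x y

def dbl (N : ℕ) : Fin N ↪o Fin (2 * N) :=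
  OrderEmbedding.ofStrictMono (fun x => ⟨2 * (x : ℕ), by have := x.isLt; omega⟩)
    (by intro x y h; rw [Fin.lt_def] at h ⊢; simp; omega)

lemma natStrictMonoOn {M : ℕ} (v : ℕ → ℕ) (h : ∀ y, y + 1 < M → v y < v (y + 1)) :
    ∀ y z, z < M → y < z → v y < v z := by
  intro y z
  induction z with
  | zero => omega
  | succ m ih =>
    intro hz hyz
    rcases Nat.lt_or_ge y m with h' | h'
    · exact lt_trans (ih (by omega) h') (h m hz)
    · have hy : y = m := by omega
      rw [hy]; exact h m hz

lemma eEmb_self {n : ℕ} (i : Fin n) : ((eEmb n i i : Fin (2 * n)) : ℕ) = 2 * (i : ℕ) + 1 := by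
  change (((fun j : Fin n => if j = i then (⟨2 * (j : ℕ) + 1, by have := j.isLt; omega⟩ : Fin (2 * n))
    else ⟨2 * (j : ℕ), by have := j.isLt; omega⟩) i : Fin (2 * n)) : ℕ) = _
  simp

lemma eEmb_ne {n : ℕ} (i x : Fin n) (h : x ≠ i) :
    ((eEmb n i x : Fin (2 * n)) : ℕ) = 2 * (x : ℕ) := by
  change (((fun j : Fin n => if j = i then (⟨2 * (j : ℕ) + 1, by have := j.isLt; omega⟩ : Fin (2 * n))
    else ⟨2 * (j : ℕ), by have := j.isLt; omega⟩) x : Fin (2 * n)) : ℕ) = _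
  simp [h]

lemma lemmaP (D : Predilator) {n : ℕ} (σ : D.obj n)
    (πσ : Equiv.Perm (Fin n)) (hπσ : IsPriorityPerm D σ πσ)
    {N : ℕ} (f' g' : Fin n ↪o Fin N) (j j' : Fin n) (hjj' : j < j')
    (hout : ∀ x, x ≠ πσ j → x ≠ πσ j' → f' x = g' x)
    (hkk : g' (πσ j) < f' (πσ j)) (hpp : f' (πσ j') < g' (πσ j')) :
    D.lt N (D.map g' σ) (D.map f' σ) := by
  classical
  set k := πσ j with hkdef
  set p := πσ j' with hpdef
  have hkp : k ≠ p := fun h => absurd (πσ.injective h) (ne_of_lt hjj')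
  set mm : Fin n → Fin N := fun x => min (f' x) (g' x) with hmmdef
  have hmmmono : StrictMono mm := by
    intro x y h
    exact lt_min (lt_of_le_of_lt (min_le_left _ _) (f'.strictMono h))
      (lt_of_le_of_lt (min_le_right _ _) (g'.strictMono h))
  have hmmf : ∀ x, x ≠ k → mm x = f' x := by
    intro x hx
    by_cases hxp : x = p
    · subst hxp; exact min_eq_left (le_of_lt hpp)
    · simp only [hmmdef]; rw [hout x hx hxp, min_self]
  have hmmg : ∀ x, x ≠ p → mm x = g' x := by
    intro x hx
    by_cases hxk : x = k
    · subst hxk; exact min_eq_right (le_of_lt hkk)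
    · simp only [hmmdef]; rw [hout x hxk hx, min_self]
  have hclaim : ∀ q : Fin n, p < q → (g' p : ℕ) < (mm q : ℕ) := by
    intro q hq
    by_cases hqk : q = k
    · subst hqk
      rw [hmmg _ hkp]
      exact Fin.lt_def.mp (g'.strictMono hq)
    · have hqp : q ≠ p := ne_of_gt hq
      rw [hmmg q hqp]
      exact Fin.lt_def.mp (g'.strictMono hq)
  set vw : ℕ → ℕ := fun y =>
    if y = 2 * (p : ℕ) + 1 then 2 * (g' p : ℕ)
    else if h : y / 2 < n then 2 * (mm ⟨y / 2, h⟩ : ℕ) + y % 2 else 0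
    with hvw
  have hvw_even : ∀ x : Fin n, vw (2 * (x : ℕ)) = 2 * (mm x : ℕ) := by
    intro x
    have hh : 2 * (x : ℕ) / 2 < n := by have := x.isLt; omega
    simp only [hvw]
    rw [if_neg (by omega), dif_pos hh]
    have heq : (⟨2 * (x : ℕ) / 2, hh⟩ : Fin n) = x := by apply Fin.ext; simp; try omega
    rw [heq]; omega
  have hvw_odd : ∀ x : Fin n, x ≠ p → vw (2 * (x : ℕ) + 1) = 2 * (mm x : ℕ) + 1 := by
    intro x hx
    have hvne : (x : ℕ) ≠ (p : ℕ) := fun h => hx (Fin.ext h)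
    have hh : (2 * (x : ℕ) + 1) / 2 < n := by have := x.isLt; omega
    simp only [hvw]
    rw [if_neg (by omega), dif_pos hh]
    have heq : (⟨(2 * (x : ℕ) + 1) / 2, hh⟩ : Fin n) = x := by apply Fin.ext; simp; try omega
    rw [heq]; omega
  have hvw_p : vw (2 * (p : ℕ) + 1) = 2 * (g' p : ℕ) := by simp [hvw]
  have hvwlt : ∀ y, y < 2 * n → vw y < 2 * N := by
    intro y hy
    simp only [hvw]
    split
    · have := (g' p).isLt; omega
    · rw [dif_pos (by omega : y / 2 < n)]
      have := (mm ⟨y / 2, by omega⟩ : Fin N).isLt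
      omega
  have hadj : ∀ y, y + 1 < 2 * n → vw y < vw (y + 1) := by
    intro y hy
    by_cases h1 : y = 2 * (p : ℕ) + 1
    · have hq : (p : ℕ) + 1 < n := by omega
      have ey : vw y = 2 * (g' p : ℕ) := by rw [h1]; exact hvw_p
      have ey1 : vw (y + 1) = 2 * (mm ⟨(p : ℕ) + 1, hq⟩ : ℕ) := by
        rw [show y + 1 = 2 * ((⟨(p : ℕ) + 1, hq⟩ : Fin n) : ℕ) by simp; omega]
        exact hvw_even _
      have := hclaim ⟨(p : ℕ) + 1, hq⟩ (by rw [Fin.lt_def]; simp)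
      omega
    · by_cases h2 : y + 1 = 2 * (p : ℕ) + 1
      · have ey : vw y = 2 * (mm p : ℕ) := by
          rw [show y = 2 * (p : ℕ) by omega]
          exact hvw_even _
        have ey1 : vw (y + 1) = 2 * (g' p : ℕ) := by rw [h2]; exact hvw_p
        have hval := congrArg Fin.val (hmmf p (Ne.symm hkp))
        have := Fin.lt_def.mp hpp
        omega
      · rcases Nat.even_or_odd y with ⟨x, hx2⟩ | ⟨x, hx2⟩
        · have hxn : x < n := by omega
          have hxp : (⟨x, hxn⟩ : Fin n) ≠ p := by
            intro h
            apply h2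
            have := congrArg Fin.val h
            simp at this
            omega
          have ey : vw y = 2 * (mm ⟨x, hxn⟩ : ℕ) := by
            rw [show y = 2 * ((⟨x, hxn⟩ : Fin n) : ℕ) by simp; omega]
            exact hvw_even _
          have ey1 : vw (y + 1) = 2 * (mm ⟨x, hxn⟩ : ℕ) + 1 := by
            rw [show y + 1 = 2 * ((⟨x, hxn⟩ : Fin n) : ℕ) + 1 by simp; omega]
            exact hvw_odd _ hxp
          omega
        · have hxn : x < n := by omega
          have hxn1 : x + 1 < n := by omega
          have hxp : (⟨x, hxn⟩ : Fin n) ≠ p := by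
            intro h
            apply h1
            have := congrArg Fin.val h
            simp at this
            omega
          have ey : vw y = 2 * (mm ⟨x, hxn⟩ : ℕ) + 1 := by
            rw [show y = 2 * ((⟨x, hxn⟩ : Fin n) : ℕ) + 1 by simp; omega]
            exact hvw_odd _ hxp
          have ey1 : vw (y + 1) = 2 * (mm ⟨x + 1, hxn1⟩ : ℕ) := by
            rw [show y + 1 = 2 * ((⟨x + 1, hxn1⟩ : Fin n) : ℕ) by simp; omega]
            exact hvw_even _
          have hlt : (⟨x, hxn⟩ : Fin n) < ⟨x + 1, hxn1⟩ := by rw [Fin.lt_def]; simp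
          have := Fin.lt_def.mp (hmmmono hlt)
          omega
  set w : Fin (2 * n) ↪o Fin (2 * N) := OrderEmbedding.ofStrictMono
    (fun y => ⟨vw y, hvwlt y y.isLt⟩)
    (by
      intro y z hyz
      simp only [Fin.mk_lt_mk]
      exact natStrictMonoOn vw hadj y z z.isLt hyz) with hwdef
  have hwval : ∀ y : Fin (2 * n), ((w y : Fin (2 * N)) : ℕ) = vw (y : ℕ) := fun y => rfl
  have hdblval : ∀ x : Fin N, ((dbl N x : Fin (2 * N)) : ℕ) = 2 * (x : ℕ) := fun x => rfl
  have e1 : (eEmb n p).trans w = g'.trans (dbl N) := by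
    apply DFunLike.ext
    intro x
    apply Fin.ext
    rw [RelEmbedding.trans_apply, RelEmbedding.trans_apply, hwval, hdblval]
    by_cases hx : x = p
    · rw [hx, eEmb_self, hvw_p]
    · rw [eEmb_ne p x hx, hvw_even]
      have := congrArg Fin.val (hmmg x hx)
      omega
  have hle2 : ∀ x, (((eEmb n k).trans w) x : Fin (2 * N)) ≤ (f'.trans (dbl N)) x := by
    intro x
    rw [Fin.le_def, RelEmbedding.trans_apply, RelEmbedding.trans_apply, hwval, hdblval]
    by_cases hx : x = k
    · rw [hx, eEmb_self, hvw_odd k hkp]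
      have hval := congrArg Fin.val (hmmg k hkp)
      have := Fin.lt_def.mp hkk
      omega
    · rw [eEmb_ne k x hx, hvw_even]
      have := congrArg Fin.val (hmmf x hx)
      omega
  have hEE : D.lt (2 * N) (D.map ((eEmb n p).trans w) σ) (D.map ((eEmb n k).trans w) σ) := by
    rw [D.map_comp, D.map_comp]
    exact D.map_lt w _ _ (hπσ j j' hjj')
  have h2 : ¬ D.lt (2 * N) (D.map (f'.trans (dbl N)) σ) (D.map ((eEmb n k).trans w) σ) :=
    D.monotone _ _ hle2 σ
  have h3 : D.lt (2 * N) (D.map (g'.trans (dbl N)) σ) (D.map (f'.trans (dbl N)) σ) := by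
    rw [← e1]
    rcases Dtrich D (D.map ((eEmb n k).trans w) σ) (D.map (f'.trans (dbl N)) σ) with h | h | h
    · exact Dtrans D hEE h
    · rw [← h]; exact hEE
    · exact absurd h h2
  rw [D.map_comp, D.map_comp, map_lt_iff] at h3
  exact h3

lemma key_lt (D : Predilator) {n : ℕ} (σ : D.obj n) (hσ : D.supp n σ = Finset.univ)
    (πσ : Equiv.Perm (Fin n)) (hπσ : IsPriorityPerm D σ πσ) :
    ∀ (d : ℕ) {N : ℕ} (f g : Fin n ↪o Fin N) (j : Fin n),
      (Finset.univ.filter (fun x => g x < f x)).card = d →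
      (∀ i : Fin n, i < j → f (πσ i) = g (πσ i)) →
      f (πσ j) < g (πσ j) →
      D.lt N (D.map f σ) (D.map g σ) := by
  intro d
  induction d with
  | zero =>
    intro N f g j hcard hagree hlt
    have hle : ∀ x, f x ≤ g x := by
      intro x
      by_contra hx
      have hmem : x ∈ Finset.univ.filter (fun x => g x < f x) := by
        simp [lt_of_not_ge hx]
      rw [Finset.card_eq_zero] at hcard
      rw [hcard] at hmem
      exact absurd hmem (Finset.notMem_empty x)
    exact D_lt_of_le D σ hσ f g hle ⟨πσ j, ne_of_lt hlt⟩
  | succ d ih =>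
    intro N f g j hcard hagree hlt
    classical
    set S := Finset.univ.filter (fun x => g x < f x) with hS
    have hSne : S.Nonempty := by rw [← Finset.card_pos, hcard]; omega
    set p₀ := S.min' hSne with hp₀
    have hp₀S : p₀ ∈ S := S.min'_mem hSne
    have hgp₀ : g p₀ < f p₀ := by
      have := hp₀S
      rw [hS, Finset.mem_filter] at this
      exact this.2
    set k := πσ j with hkdef
    have hkS : k ∉ S := by
      rw [hS, Finset.mem_filter]
      push_neg
      intro _
      exact le_of_lt hlt
    have hkp₀ : k ≠ p₀ := fun h => hkS (h ▸ hp₀S)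
    set j' := πσ.symm p₀ with hj'
    have hπj' : πσ j' = p₀ := πσ.apply_symm_apply p₀
    have hjj' : j < j' := by
      rcases lt_trichotomy j j' with h | h | h
      · exact h
      · exfalso; apply hkp₀; rw [hkdef, h, hπj']
      · exfalso
        have heq := hagree j' h
        rw [hπj'] at heq
        rw [heq] at hgp₀
        exact lt_irrefl _ hgp₀
    -- facts on ℕ level
    have hgfk : (f k : ℕ) < g k := Fin.lt_def.mp hlt
    have hgfp₀ : (g p₀ : ℕ) < f p₀ := Fin.lt_def.mp hgp₀
    have hnotS : ∀ x : Fin n, x ∉ S → (f x : ℕ) ≤ g x := by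
      intro x hx
      rw [hS, Finset.mem_filter] at hx
      push_neg at hx
      exact Fin.le_def.mp (hx (Finset.mem_univ x))
    -- define f₂
    set f₂fun : Fin n → Fin (2 * N) := fun x =>
      if x = p₀ then ⟨2 * (g p₀ : ℕ), by have := (g p₀).isLt; omega⟩
      else if x = k then ⟨2 * (f x : ℕ) + 1, by have := (f x).isLt; omega⟩
      else ⟨2 * (f x : ℕ), by have := (f x).isLt; omega⟩ with hf₂fun
    have hf₂p₀ : (f₂fun p₀ : ℕ) = 2 * (g p₀ : ℕ) := by simp [hf₂fun]
    have hf₂k : (f₂fun k : ℕ) = 2 * (f k : ℕ) + 1 := by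
      simp [hf₂fun, if_neg hkp₀]
    have hf₂gen : ∀ x, x ≠ p₀ → x ≠ k → (f₂fun x : ℕ) = 2 * (f x : ℕ) := by
      intro x hx1 hx2
      simp [hf₂fun, if_neg hx1, if_neg hx2]
    have hf₂val : ∀ x, (f₂fun x : ℕ) = 2 * (f x : ℕ) ∨ (f₂fun x : ℕ) = 2 * (f x : ℕ) + 1 ∨
        (x = p₀ ∧ (f₂fun x : ℕ) = 2 * (g p₀ : ℕ)) := by
      intro x
      by_cases hx1 : x = p₀
      · right; right; exact ⟨hx1, by rw [hx1]; exact hf₂p₀⟩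
      · by_cases hx2 : x = k
        · right; left; rw [hx2]; exact hf₂k
        · left; exact hf₂gen x hx1 hx2
    have hf₂mono : StrictMono f₂fun := by
      intro x y hxy
      rw [Fin.lt_def]
      have hfval : (f x : ℕ) < f y := Fin.lt_def.mp (f.strictMono hxy)
      by_cases hy1 : y = p₀
      · -- x < p₀ so x ∉ S, f x ≤ g x < g p₀
        have hxS : x ∉ S := by
          intro hxS
          have := S.min'_le x hxS
          rw [← hp₀] at this
          rw [hy1] at hxy
          exact absurd hxy (not_lt.mpr this)
        have h1 : (f x : ℕ) ≤ g x := hnotS x hxS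
        have h2 : (g x : ℕ) < g p₀ := Fin.lt_def.mp (g.strictMono (hy1 ▸ hxy))
        have hx1 : x ≠ p₀ := by
          intro h
          rw [h, hy1] at hxy
          exact lt_irrefl _ hxy
        rcases hf₂val x with h | h | ⟨he, _⟩
        · rw [h, hy1, hf₂p₀]; omega
        · rw [h, hy1, hf₂p₀]; omega
        · exact absurd he hx1
      · have hy' : (f₂fun y : ℕ) = 2 * (f y : ℕ) ∨ (f₂fun y : ℕ) = 2 * (f y : ℕ) + 1 := by
          rcases hf₂val y with h | h | ⟨he, _⟩
          · exact Or.inl h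
          · exact Or.inr h
          · exact absurd he hy1
        by_cases hx1 : x = p₀
        ·
          have h1 : (g p₀ : ℕ) < f p₀ := hgfp₀
          have h2 : (f p₀ : ℕ) < f y := by
            rw [← hx1]; exact hfval
          rw [hx1, hf₂p₀]
          rcases hy' with h | h <;> rw [h] <;> omega
        · have hx' : (f₂fun x : ℕ) ≤ 2 * (f x : ℕ) + 1 := by
            rcases hf₂val x with h | h | ⟨he, _⟩
            · omega
            · omega
            · exact absurd he hx1
          rcases hy' with h | h <;> rw [h] <;> omega
    set f₂ : Fin n ↪o Fin (2 * N) := OrderEmbedding.ofStrictMono f₂fun hf₂mono with hf₂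
    have hf₂app : ∀ x, (f₂ x : ℕ) = (f₂fun x : ℕ) := fun x => rfl
    have hfd : ∀ x : Fin n, ((f.trans (dbl N)) x : ℕ) = 2 * (f x : ℕ) := fun x => rfl
    have hgd : ∀ x : Fin n, ((g.trans (dbl N)) x : ℕ) = 2 * (g x : ℕ) := fun x => rfl
    -- Step 1: lemmaP gives D (f.trans dbl) < D f₂
    have step1 : D.lt (2 * N) (D.map (f.trans (dbl N)) σ) (D.map f₂ σ) := by
      apply lemmaP D σ πσ hπσ f₂ (f.trans (dbl N)) j j' hjj'
      · intro x hx1 hx2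
        rw [← hkdef] at hx1
        rw [hπj'] at hx2
        apply Fin.ext
        rw [hf₂app, hfd, hf₂gen x hx2 hx1]
      · rw [← hkdef, Fin.lt_def, hf₂app, hfd, hf₂k]
        omega
      · rw [hπj', Fin.lt_def, hf₂app, hfd, hf₂p₀]
        omega
    -- Step 2: induction hypothesis on (f₂, g.trans dbl)
    have hcard₂ : (Finset.univ.filter (fun x => (g.trans (dbl N)) x < f₂ x)).card = d := by
      have hSeq : Finset.univ.filter (fun x => (g.trans (dbl N)) x < f₂ x) = S.erase p₀ := by
        ext x
        rw [Finset.mem_erase, Finset.mem_filter, hS, Finset.mem_filter]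
        simp only [Finset.mem_univ, true_and]
        constructor
        · intro hx
          rw [Fin.lt_def, hf₂app, hgd] at hx
          by_cases hx1 : x = p₀
          · rw [hx1, hf₂p₀] at hx
            exact absurd hx (lt_irrefl _)
          · constructor
            · exact hx1
            · by_cases hx2 : x = k
              · exfalso
                rw [hx2, hf₂k] at hx
                omega
              · rw [hf₂gen x hx1 hx2] at hx
                rw [Fin.lt_def]
                omega
        · intro ⟨hx1, hx2⟩
          rw [Fin.lt_def, hf₂app, hgd]
          by_cases hxk : x = k
          · exfalso
            rw [hxk] at hx2
            have := Fin.lt_def.mp hx2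
            omega
          · rw [hf₂gen x hx1 hxk]
            have := Fin.lt_def.mp hx2
            omega
      rw [hSeq, Finset.card_erase_of_mem hp₀S, hcard]
      omega
    have hagree₂ : ∀ i : Fin n, i < j → f₂ (πσ i) = (g.trans (dbl N)) (πσ i) := by
      intro i hi
      have hik : πσ i ≠ k := fun h => absurd (πσ.injective h) (ne_of_lt hi)
      have hip : πσ i ≠ p₀ := by
        intro h
        have : πσ i ∈ S := h ▸ hp₀S
        rw [hS, Finset.mem_filter] at this
        rw [hagree i hi] at this
        exact lt_irrefl _ this.2
      apply Fin.ext
      rw [hf₂app, hgd, hf₂gen _ hip hik]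
      rw [hagree i hi]
    have hlt₂ : f₂ (πσ j) < (g.trans (dbl N)) (πσ j) := by
      rw [Fin.lt_def, hf₂app, hgd, ← hkdef, hf₂k]
      omega
    have step2 : D.lt (2 * N) (D.map f₂ σ) (D.map (g.trans (dbl N)) σ) :=
      ih f₂ (g.trans (dbl N)) j hcard₂ hagree₂ hlt₂
    have h3 : D.lt (2 * N) (D.map (f.trans (dbl N)) σ) (D.map (g.trans (dbl N)) σ) :=
      Dtrans D step1 step2
    rw [D.map_comp, D.map_comp, map_lt_iff] at h3
    exact h3

lemma girard_iff (D : Predilator) {n : ℕ} (σ : D.obj n) (hσ : D.supp n σ = Finset.univ)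
    (πσ : Equiv.Perm (Fin n)) (hπσ : IsPriorityPerm D σ πσ)
    {N : ℕ} (f g : Fin n ↪o Fin N) :
    D.lt N (D.map f σ) (D.map g σ) ↔
      ∃ j : Fin n, f (πσ j) < g (πσ j) ∧ ∀ i : Fin n, i < j → f (πσ i) = g (πσ i) := by
  classical
  constructor
  · intro h
    set T := Finset.univ.filter (fun i : Fin n => f (πσ i) ≠ g (πσ i)) with hT
    by_cases hTne : T.Nonempty
    · set j₀ := T.min' hTne with hj₀
      have hj₀T : j₀ ∈ T := T.min'_mem hTne
      have hj₀ne : f (πσ j₀) ≠ g (πσ j₀) := by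
        have h2 := hj₀T
        rw [hT, Finset.mem_filter] at h2
        exact h2.2
      have hagree : ∀ i : Fin n, i < j₀ → f (πσ i) = g (πσ i) := by
        intro i hi
        by_contra hne
        have hm : i ∈ T := by rw [hT, Finset.mem_filter]; exact ⟨Finset.mem_univ i, hne⟩
        have hle := T.min'_le i hm
        rw [← hj₀] at hle
        exact absurd hi (not_lt.mpr hle)
      rcases lt_trichotomy (f (πσ j₀)) (g (πσ j₀)) with hc | hc | hc
      · exact ⟨j₀, hc, hagree⟩
      · exact absurd hc hj₀ne
      · exfalso
        have hgt := key_lt D σ hσ πσ hπσ _ g f j₀ rfl (fun i hi => (hagree i hi).symm) hc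
        exact Dasymm D hgt h
    · exfalso
      have hfg : f = g := by
        apply DFunLike.ext
        intro x
        have hnm : πσ.symm x ∉ T := fun hm => hTne ⟨_, hm⟩
        have h2 : f (πσ (πσ.symm x)) = g (πσ (πσ.symm x)) := by
          by_contra hne
          exact hnm (by rw [hT, Finset.mem_filter]; exact ⟨Finset.mem_univ _, hne⟩)
        rwa [πσ.apply_symm_apply] at h2
      rw [hfg] at h
      exact Dirrefl D _ h
  · rintro ⟨j, hjlt, hjeq⟩
    exact key_lt D σ hσ πσ hπσ _ f g j rfl hjeq hjlt


/-- Girard's comparison of `(σ,a)` and `(σ,b)` in the extension `D̄(α)`: for a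
trace element `(σ,n)` with priority permutation `π_σ` and finsets `a, b ⊆ α` of
size `n`, we have `(σ,a) < (σ,b)` iff there is `j < n` with `a^σ_j < b^σ_j` and
`a^σ_i = b^σ_i` for all `i < j`. -/
theorem stmt19 {α : Type*} [LinearOrder α] (D : Predilator) {n : ℕ}
    (σ : D.obj n) (hσ : D.supp n σ = Finset.univ)
    (πσ : Equiv.Perm (Fin n)) (hπσ : IsPriorityPerm D σ πσ)
    (a b : Finset α) (ha : a.card = n) (hb : b.card = n) :
    D.lt (a ∪ b).card
        (D.map (inclEmb a (a ∪ b) Finset.subset_union_left ha) σ)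
        (D.map (inclEmb b (a ∪ b) Finset.subset_union_right hb) σ) ↔
      ∃ j : Fin n, (a.orderIsoOfFin ha (πσ j) : α) < (b.orderIsoOfFin hb (πσ j) : α) ∧
        ∀ i : Fin n, i < j →
          (a.orderIsoOfFin ha (πσ i) : α) = (b.orderIsoOfFin hb (πσ i) : α) := by
  classical
  rw [girard_iff D σ hσ πσ hπσ]
  have keylt : ∀ i : Fin n,
      ((inclEmb a (a ∪ b) Finset.subset_union_left ha) i
          < (inclEmb b (a ∪ b) Finset.subset_union_right hb) i
        ↔ (a.orderIsoOfFin ha i : α) < (b.orderIsoOfFin hb i : α)) := by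
    intro i
    show ((a ∪ b).orderIsoOfFin rfl).symm ⟨(a.orderIsoOfFin ha i : α), _⟩
        < ((a ∪ b).orderIsoOfFin rfl).symm ⟨(b.orderIsoOfFin hb i : α), _⟩ ↔ _
    rw [OrderIso.lt_iff_lt]
    exact Subtype.mk_lt_mk
  have keyeq : ∀ i : Fin n,
      ((inclEmb a (a ∪ b) Finset.subset_union_left ha) i
          = (inclEmb b (a ∪ b) Finset.subset_union_right hb) i
        ↔ (a.orderIsoOfFin ha i : α) = (b.orderIsoOfFin hb i : α)) := by
    intro i
    show ((a ∪ b).orderIsoOfFin rfl).symm ⟨(a.orderIsoOfFin ha i : α), _⟩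
        = ((a ∪ b).orderIsoOfFin rfl).symm ⟨(b.orderIsoOfFin hb i : α), _⟩ ↔ _
    rw [EmbeddingLike.apply_eq_iff_eq]
    exact Subtype.mk_eq_mk
  constructor
  · rintro ⟨j, h1, h2⟩
    exact ⟨j, (keylt _).mp h1, fun i hi => (keyeq _).mp (h2 i hi)⟩
  · rintro ⟨j, h1, h2⟩
    exact ⟨j, (keylt _).mpr h1, fun i hi => (keyeq _).mpr (h2 i hi)⟩
end
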